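/- arXiv:2101.04292 — 8 statements merged into one kernel-verified Lean document; each statement's English description precedes it below -/
import Mathlib

section
/- Let X ∈ 𝕆^{n×k}. Then X is a KKT point of the problem max_{X ∈ 𝕆^{n×k}} f_θ(X), i.e. (2/(tr(XᵀBX))^θ)·[AX + D/2 − θ f₁(X)·BX] = X·Λ̂ holds for some symmetric Λ̂ ∈ ℝ^{k×k}, if and only if X is an orthonormal basis matrix of a k-dimensional invariant subspace of E(X) (i.e. E(X)·X = X·(Xᵀ E(X) X)) and XᵀD is symmetric. -/
open Matrix

noncomputable section

/-- `f₁(X) = tr(XᵀAX + XᵀD) / tr(XᵀBX)`. -/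
def f1 {n k : ℕ} (A B : Matrix (Fin n) (Fin n) ℝ) (D : Matrix (Fin n) (Fin k) ℝ)
    (X : Matrix (Fin n) (Fin k) ℝ) : ℝ :=
  (trace (Xᵀ * A * X) + trace (Xᵀ * D)) / trace (Xᵀ * B * X)

/-- `E(X) = (2/(tr(XᵀBX))^θ) · [A + (DXᵀ + XDᵀ)/2 − θ f₁(X) B]`. -/
def Emat {n k : ℕ} (A B : Matrix (Fin n) (Fin n) ℝ) (D : Matrix (Fin n) (Fin k) ℝ)
    (θ : ℝ) (X : Matrix (Fin n) (Fin k) ℝ) : Matrix (Fin n) (Fin n) ℝ :=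
  (2 / trace (Xᵀ * B * X) ^ θ) •
    (A + (2⁻¹ : ℝ) • (D * Xᵀ + X * Dᵀ) - (θ * f1 A B D X) • B)

/-- Positivity of `tr(XᵀBX)` under the rank assumption. -/
lemma trace_XBX_pos {n k : ℕ} (B : Matrix (Fin n) (Fin n) ℝ) (hB : B.PosSemidef)
    (hrank : n - k < B.rank) (hkn : k < n)
    (X : Matrix (Fin n) (Fin k) ℝ) (hX : Xᵀ * X = 1) :
    0 < trace (Xᵀ * B * X) := by
  have hBX : B * X ≠ 0 := by
    intro h0
    have hker : LinearMap.range X.mulVecLin ≤ LinearMap.ker B.mulVecLin := by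
      rintro _ ⟨v, rfl⟩
      simp [LinearMap.mem_ker, mulVecLin_apply, mulVec_mulVec, h0]
    have h1 : X.rank ≤ Module.finrank ℝ (LinearMap.ker B.mulVecLin) := by
      rw [Matrix.rank]
      exact Submodule.finrank_mono hker
    have h2 : B.rank + Module.finrank ℝ (LinearMap.ker B.mulVecLin) = n := by
      rw [Matrix.rank]
      simpa using LinearMap.finrank_range_add_finrank_ker B.mulVecLin
    have hXr : k ≤ X.rank := by
      calc k = (1 : Matrix (Fin k) (Fin k) ℝ).rank := by simp [Matrix.rank_one]
      _ = (Xᵀ*X).rank := by rw [hX]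
      _ ≤ X.rank := Matrix.rank_mul_le_right _ _
    omega
  have heq : trace (Xᵀ * B * X) = ∑ i, (fun j => X j i) ⬝ᵥ B *ᵥ (fun j => X j i) := by
    rw [Matrix.mul_assoc, Matrix.trace]
    refine Finset.sum_congr rfl fun i _ => ?_
    simp [Matrix.diag, Matrix.mul_apply, dotProduct, Matrix.mulVec]
  have hnn : ∀ i : Fin k, 0 ≤ (fun j => X j i) ⬝ᵥ B *ᵥ (fun j => X j i) := by
    intro i
    simpa using hB.dotProduct_mulVec_nonneg (fun j => X j i)
  rw [heq]
  rcases (Finset.sum_nonneg fun i _ => hnn i).lt_or_eq with h | h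
  · exact h
  · exfalso
    apply hBX
    ext i j
    have := (Finset.sum_eq_zero_iff_of_nonneg fun i _ => hnn i).mp h.symm j (Finset.mem_univ j)
    have hz : B *ᵥ (fun l => X l j) = 0 := by
      have := (hB.dotProduct_mulVec_zero_iff (fun l => X l j)).mp (by simpa using this)
      exact this
    have := congrFun hz i
    simpa [Matrix.mulVec, Matrix.mul_apply, dotProduct] using this

/-- `X ∈ 𝕆^{n×k}` is a KKT point of `max f_θ` iff `E(X)X = X(XᵀE(X)X)` and `XᵀD` is symmetric. -/
theorem stmt0 {n k : ℕ} (hk : 1 ≤ k) (hkn : k < n)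
    (A B : Matrix (Fin n) (Fin n) ℝ) (hA : A.IsSymm) (hB : B.PosSemidef)
    (hrank : n - k < B.rank)
    (D : Matrix (Fin n) (Fin k) ℝ) (θ : ℝ) (hθ0 : 0 ≤ θ) (hθ1 : θ ≤ 1)
    (X : Matrix (Fin n) (Fin k) ℝ) (hX : Xᵀ * X = 1) :
    (∃ Λ : Matrix (Fin k) (Fin k) ℝ, Λ.IsSymm ∧
        (2 / trace (Xᵀ * B * X) ^ θ) •
          (A * X + (2⁻¹ : ℝ) • D - (θ * f1 A B D X) • (B * X)) = X * Λ)
      ↔ (Emat A B D θ X * X = X * (Xᵀ * Emat A B D θ X * X) ∧ (Xᵀ * D).IsSymm) := by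
  have htr : 0 < trace (Xᵀ * B * X) := trace_XBX_pos B hB hrank hkn X hX
  set c : ℝ := 2 / trace (Xᵀ * B * X) ^ θ with hc
  set s : ℝ := θ * f1 A B D X with hs
  have hcpos : 0 < c := by
    apply div_pos two_pos (Real.rpow_pos_of_pos htr θ)
  have hc0 : c ≠ 0 := ne_of_gt hcpos
  have hBs : Bᵀ = B := by
    have := hB.1
    rwa [Matrix.IsHermitian, Matrix.conjTranspose_eq_transpose_of_trivial] at this
  have hAs : Aᵀ = A := hA
  -- key expansion
  have h1 : Emat A B D θ X * X
      = c • (A * X + (2⁻¹ : ℝ) • D - s • (B * X)) + (c * 2⁻¹) • (X * (Dᵀ * X)) := by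
    rw [Emat, ← hc, ← hs, Matrix.smul_mul, Matrix.sub_mul, Matrix.add_mul, Matrix.smul_mul,
      Matrix.smul_mul, Matrix.add_mul, Matrix.mul_assoc D, Matrix.mul_assoc X, hX,
      Matrix.mul_one]
    module
  constructor
  · rintro ⟨Λ, hΛ, hKKT⟩
    have hEX : Emat A B D θ X * X = X * Λ + (c * 2⁻¹) • (X * (Dᵀ * X)) := by
      rw [h1, hKKT]
    constructor
    · have h2 : Xᵀ * Emat A B D θ X * X = Λ + (c * 2⁻¹) • (Dᵀ * X) := by
        rw [Matrix.mul_assoc, hEX, Matrix.mul_add, Matrix.mul_smul, ← Matrix.mul_assoc,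
          ← Matrix.mul_assoc, hX, Matrix.one_mul, Matrix.one_mul]
      rw [h2, hEX, Matrix.mul_add, Matrix.mul_smul]
    · -- symmetry of XᵀD
      have h3 : c • (Xᵀ * A * X) + (c * 2⁻¹) • (Xᵀ * D) - (c * s) • (Xᵀ * B * X) = Λ := by
        have := congrArg (fun M => Xᵀ * M) hKKT
        simp only [Matrix.mul_smul, Matrix.mul_add, Matrix.mul_sub,
          ← Matrix.mul_assoc] at this
        rw [hX, Matrix.one_mul] at this
        rw [← this]
        module
      have h4 : c • (Xᵀ * A * X) + (c * 2⁻¹) • (Dᵀ * X) - (c * s) • (Xᵀ * B * X) = Λ := by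
        have h4' := congrArg Matrix.transpose h3
        simp only [Matrix.transpose_sub, Matrix.transpose_add, Matrix.transpose_smul,
          Matrix.transpose_mul, Matrix.transpose_transpose, hAs, hBs,
          ← Matrix.mul_assoc] at h4'
        rw [hΛ.eq] at h4'
        exact h4'
      have hcc : (c * 2⁻¹ : ℝ) ≠ 0 := by positivity
      have h5 : (c * 2⁻¹) • (Xᵀ * D) = (c * 2⁻¹) • (Dᵀ * X) := by
        have h6 := h3.trans h4.symm
        have h7 : (c * 2⁻¹) • (Xᵀ * D) - (c * 2⁻¹) • (Dᵀ * X) = 0 := by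
          rw [← sub_eq_zero] at h6
          rw [← h6]
          module
        rw [sub_eq_zero] at h7
        exact h7
      have h8 : Xᵀ * D = Dᵀ * X := by
        have h9 := congrArg (fun M => (c * 2⁻¹)⁻¹ • M) h5
        simp only [smul_smul, inv_mul_cancel₀ hcc, one_smul] at h9
        exact h9
      rw [Matrix.IsSymm, Matrix.transpose_mul, Matrix.transpose_transpose, ← h8]
  · rintro ⟨hE, hD⟩
    refine ⟨Xᵀ * Emat A B D θ X * X - (c * 2⁻¹) • (Dᵀ * X), ?_, ?_⟩
    · have hEsym : (Emat A B D θ X)ᵀ = Emat A B D θ X := by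
        rw [Emat, ← hc, ← hs]
        simp only [Matrix.transpose_smul, Matrix.transpose_sub, Matrix.transpose_add,
          Matrix.transpose_mul, Matrix.transpose_transpose, hAs, hBs]
        congr 2
        abel
      have hDX : Dᵀ * X = Xᵀ * D := by
        have := hD
        rwa [Matrix.IsSymm, Matrix.transpose_mul, Matrix.transpose_transpose] at this
      rw [Matrix.IsSymm]
      simp only [Matrix.transpose_sub, Matrix.transpose_smul, Matrix.transpose_mul,
        Matrix.transpose_transpose, hEsym, hDX]
      rw [Matrix.mul_assoc]
    · rw [Matrix.mul_sub, Matrix.mul_smul, ← hE, h1]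
      module

end
end

section
/- Let X, X̃ ∈ 𝕆^{n×k} and set α = tr(XᵀAX), δ = tr(XᵀD), β = tr(XᵀBX), β̃ = tr(X̃ᵀBX̃). If tr(X̃ᵀ E(X) X̃) ≥ tr(Xᵀ E(X) X), then f_θ(X) + γ ≤ g_θ(X̃) + tr(X̃ᵀ D Xᵀ X̃)/(tr(X̃ᵀBX̃))^θ, where γ = ((α + δ)/(β̃^θ β))·[(1−θ)β + θβ̃ − β^{1−θ} β̃^θ]. Moreover, if the hypothesis inequality tr(X̃ᵀ E(X) X̃) ≥ tr(Xᵀ E(X) X) is strict, then the conclusion inequality is strict. -/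
open Matrix

noncomputable section


lemma trace_transpose_mul_self_pos {m p : ℕ} {M : Matrix (Fin m) (Fin p) ℝ} (hM : M ≠ 0) :
    0 < trace (Mᵀ * M) := by
  have key : trace (Mᵀ * M) = ∑ i, ∑ j, M j i * M j i := by
    simp [Matrix.trace, Matrix.diag, Matrix.mul_apply]
  rw [key]
  refine lt_of_le_of_ne (Finset.sum_nonneg fun i _ => Finset.sum_nonneg fun j _ => mul_self_nonneg _) fun h => hM ?_
  have h' := h.symm
  rw [Finset.sum_eq_zero_iff_of_nonneg (fun i _ => Finset.sum_nonneg fun j _ => mul_self_nonneg _)] at h'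
  ext j i
  have := (Finset.sum_eq_zero_iff_of_nonneg (fun j _ => mul_self_nonneg (M j i))).mp (h' i (Finset.mem_univ i)) j (Finset.mem_univ j)
  simpa [mul_self_eq_zero] using this

lemma trace_pos_aux {n k : ℕ} (hkn : k ≤ n) {B : Matrix (Fin n) (Fin n) ℝ} (hB : B.PosSemidef)
    (hrank : n - k < B.rank) {X : Matrix (Fin n) (Fin k) ℝ} (hX : Xᵀ * X = 1) :
    0 < trace (Xᵀ * B * X) := by
  obtain ⟨C, hC⟩ : ∃ C : Matrix (Fin n) (Fin n) ℝ, B = Cᴴ * C := by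
    open scoped MatrixOrder in
    exact CStarAlgebra.nonneg_iff_eq_star_mul_self.mp hB.nonneg
  have hCt : Cᴴ = Cᵀ := by ext i j; simp [conjTranspose_apply]
  rw [hCt] at hC
  have hrw : Xᵀ * B * X = (C * X)ᵀ * (C * X) := by
    rw [hC, transpose_mul, ← Matrix.mul_assoc, Matrix.mul_assoc (Xᵀ * Cᵀ)]
  rw [hrw]
  apply trace_transpose_mul_self_pos
  intro hCX
  have hr := Matrix.rank_add_rank_le_card_of_mul_eq_zero hCX
  have hXr : X.rank = k := by
    have h2 := X.rank_transpose_mul_self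
    rw [hX] at h2
    simpa [Matrix.rank_one] using h2.symm
  have hBr : B.rank = C.rank := by rw [hC]; exact C.rank_transpose_mul_self
  rw [hXr, Fintype.card_fin] at hr
  omega


/-- `f_θ(X) = tr(XᵀAX + XᵀD) / (tr(XᵀBX))^θ`. -/
def fTheta {n k : ℕ} (A B : Matrix (Fin n) (Fin n) ℝ) (D : Matrix (Fin n) (Fin k) ℝ)
    (θ : ℝ) (X : Matrix (Fin n) (Fin k) ℝ) : ℝ :=
  (trace (Xᵀ * A * X) + trace (Xᵀ * D)) / trace (Xᵀ * B * X) ^ θ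

/-- `g_θ(X) = tr(XᵀAX) / (tr(XᵀBX))^θ`. -/
def gTheta {n k : ℕ} (A B : Matrix (Fin n) (Fin n) ℝ) (θ : ℝ)
    (X : Matrix (Fin n) (Fin k) ℝ) : ℝ :=
  trace (Xᵀ * A * X) / trace (Xᵀ * B * X) ^ θ

/-- Lemma 2.3: if `tr(X̃ᵀE(X)X̃) ≥ tr(XᵀE(X)X)` then
`f_θ(X) + γ ≤ g_θ(X̃) + tr(X̃ᵀDXᵀX̃)/(tr(X̃ᵀBX̃))^θ`, with strictness carrying over. -/
theorem stmt1 {n k : ℕ} (hk : 1 ≤ k) (hkn : k < n)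
    (A B : Matrix (Fin n) (Fin n) ℝ) (hA : A.IsSymm) (hB : B.PosSemidef)
    (hrank : n - k < B.rank)
    (D : Matrix (Fin n) (Fin k) ℝ) (θ : ℝ) (hθ0 : 0 ≤ θ) (hθ1 : θ ≤ 1)
    (X Xt : Matrix (Fin n) (Fin k) ℝ) (hX : Xᵀ * X = 1) (hXt : Xtᵀ * Xt = 1)
    (α δ β βt γ : ℝ)
    (hα : α = trace (Xᵀ * A * X)) (hδ : δ = trace (Xᵀ * D))
    (hβ : β = trace (Xᵀ * B * X)) (hβt : βt = trace (Xtᵀ * B * Xt))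
    (hγ : γ = (α + δ) / (βt ^ θ * β) * ((1 - θ) * β + θ * βt - β ^ (1 - θ) * βt ^ θ))
    (htr : trace (Xᵀ * Emat A B D θ X * X) ≤ trace (Xtᵀ * Emat A B D θ X * Xt)) :
    fTheta A B D θ X + γ
        ≤ gTheta A B θ Xt + trace (Xtᵀ * D * Xᵀ * Xt) / trace (Xtᵀ * B * Xt) ^ θ
      ∧ (trace (Xᵀ * Emat A B D θ X * X) < trace (Xtᵀ * Emat A B D θ X * Xt) →
          fTheta A B D θ X + γ
            < gTheta A B θ Xt + trace (Xtᵀ * D * Xᵀ * Xt) / trace (Xtᵀ * B * Xt) ^ θ) := by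
  have hβpos : 0 < β := hβ ▸ trace_pos_aux hkn.le hB hrank hX
  have hβtpos : 0 < βt := hβt ▸ trace_pos_aux hkn.le hB hrank hXt
  have hbθ : 0 < β ^ θ := Real.rpow_pos_of_pos hβpos θ
  have hbtθ : 0 < βt ^ θ := Real.rpow_pos_of_pos hβtpos θ
  set aT := trace (Xtᵀ * A * Xt) with haT
  set dt := trace (Xtᵀ * D * Xᵀ * Xt) with hdt
  have expand : ∀ Y : Matrix (Fin n) (Fin k) ℝ,
      trace (Yᵀ * Emat A B D θ X * Y)
        = 2 / β ^ θ * (trace (Yᵀ * A * Y)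
            + 2⁻¹ * (trace (Yᵀ * (D * Xᵀ) * Y) + trace (Yᵀ * (X * Dᵀ) * Y))
            - θ * ((α + δ) / β) * trace (Yᵀ * B * Y)) := by
    intro Y
    simp only [Emat, f1, ← hα, ← hδ, ← hβ, Matrix.mul_smul, Matrix.smul_mul,
      Matrix.mul_add, Matrix.add_mul, Matrix.sub_mul, Matrix.mul_sub,
      trace_smul, trace_add, trace_sub, smul_eq_mul]
  have t1 : trace (Xᵀ * (D * Xᵀ) * X) = δ := by
    rw [← Matrix.mul_assoc, Matrix.mul_assoc (Xᵀ * D), hX, mul_one]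
    exact hδ.symm
  have t2 : trace (Xᵀ * (X * Dᵀ) * X) = δ := by
    rw [← Matrix.mul_assoc Xᵀ X Dᵀ, hX, Matrix.one_mul, ← Matrix.trace_transpose,
      Matrix.transpose_mul, Matrix.transpose_transpose]
    exact hδ.symm
  have t4 : trace (Xtᵀ * (X * Dᵀ) * Xt) = dt := by
    rw [← Matrix.trace_transpose]
    simp [Matrix.transpose_mul, Matrix.mul_assoc, hdt]
  have t5 : trace (Xtᵀ * (D * Xᵀ) * Xt) = dt := by
    rw [← Matrix.mul_assoc, hdt]
  have hEX : trace (Xᵀ * Emat A B D θ X * X) = 2 / β ^ θ * ((1 - θ) * (α + δ)) := by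
    rw [expand X, t1, t2, ← hα, ← hβ]
    field_simp
    ring
  have hEXt : trace (Xtᵀ * Emat A B D θ X * Xt)
      = 2 / β ^ θ * (aT + dt - θ * ((α + δ) / β) * βt) := by
    rw [expand Xt, t4, t5, ← haT, ← hβt]
    ring
  have hmul : (0:ℝ) < 2 / β ^ θ := by positivity
  have hkey : fTheta A B D θ X + γ
      = ((1 - θ) * (α + δ) + θ * ((α + δ) / β) * βt) / βt ^ θ := by
    have h1θ : β ^ (1 - θ) = β / β ^ θ := by
      rw [eq_div_iff hbθ.ne', ← Real.rpow_add hβpos]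
      norm_num
    rw [fTheta, ← hα, ← hδ, ← hβ, hγ, h1θ]
    field_simp
    ring
  have hgoal_eq : gTheta A B θ Xt + dt / trace (Xtᵀ * B * Xt) ^ θ
      = (aT + dt) / βt ^ θ := by
    rw [gTheta, ← haT, ← hβt, ← add_div]
  rw [hEX, hEXt] at htr ⊢
  rw [hkey, hgoal_eq]
  constructor
  · rw [div_le_div_iff_of_pos_right hbtθ]
    have h1 := (mul_le_mul_iff_right₀ hmul).mp htr
    linarith
  · intro hlt
    rw [div_lt_div_iff_of_pos_right hbtθ]
    have h1 := (mul_lt_mul_iff_right₀ hmul).mp hlt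
    linarith

end
end

section
/- Let X_opt ∈ 𝕆^{n×k} be a global maximizer of f_θ over 𝕆^{n×k}. Then X_optᵀD is symmetric positive semidefinite. -/
open Matrix
open scoped MatrixOrder

noncomputable section

lemma trace_stdBasis_mul {k : ℕ} (M : Matrix (Fin k) (Fin k) ℝ) (a b : Fin k) :
    trace (single a b (1:ℝ) * M) = M b a := by
  rw [trace]
  rw [Finset.sum_eq_single a]
  · simp [diag]
  · intro x _ hx; simp [diag, hx]
  · simp

lemma key_psd {k : ℕ} (M : Matrix (Fin k) (Fin k) ℝ)
    (h : ∀ Q : Matrix (Fin k) (Fin k) ℝ, Qᵀ * Q = 1 → trace (Qᵀ * M) ≤ trace M) :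
    M.PosSemidef := by
  have hsymm : ∀ i j : Fin k, M j i = M i j := by
    intro i j
    rcases eq_or_ne i j with rfl | hij
    · rfl
    have hij' : j ≠ i := hij.symm
    set P : Matrix (Fin k) (Fin k) ℝ := single i i 1 + single j j 1 with hPdef
    set J : Matrix (Fin k) (Fin k) ℝ := single j i 1 - single i j 1 with hJdef
    have hEt : ∀ (a b : Fin k), (single a b (1:ℝ))ᵀ = single b a 1 := by
      intro a b; ext x y
      simp [transpose_apply, single, and_comm]
    have hPt : Pᵀ = P := by simp [hPdef, transpose_add, hEt]
    have hJt : Jᵀ = -J := by simp [hJdef, transpose_sub, hEt]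
    have hPP : P * P = P := by
      simp [hPdef, mul_add, add_mul, hij, hij']
    have hPJ : P * J = J := by
      simp [hPdef, hJdef, mul_sub, add_mul, hij, hij']
    have hJP : J * P = J := by
      simp [hPdef, hJdef, sub_mul, mul_add, hij, hij']
      abel
    have hJJ : J * J = -P := by
      simp [hPdef, hJdef, sub_mul, mul_sub, hij, hij']
      abel
    set a : ℝ := M i i + M j j with hadef
    set b : ℝ := M i j - M j i with hbdef
    have main : ∀ c s : ℝ, c^2 + s^2 = 1 → (c - 1) * a - s * b ≤ 0 := by
      intro c s hcs
      set Q : Matrix (Fin k) (Fin k) ℝ := 1 + (c-1) • P + s • J with hQdef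
      have hQt : Qᵀ = 1 + (c-1) • P - s • J := by
        simp [hQdef, transpose_add, transpose_smul, hPt, hJt, smul_neg, sub_eq_add_neg]
      have hQorth : Qᵀ * Q = 1 := by
        rw [hQt, hQdef]
        have expand : (1 + (c-1) • P - s • J) * (1 + (c-1) • P + s • J)
            = 1 + (c^2 + s^2 - 1) • P := by
          simp only [mul_add, add_mul, sub_mul, mul_sub, one_mul, mul_one,
            smul_mul_assoc, mul_smul_comm, smul_smul, hPP, hPJ, hJP, hJJ, smul_neg]
          module
        rw [expand, hcs]; simp
      have hPM : trace (P * M) = a := by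
        rw [hPdef, add_mul, trace_add, trace_stdBasis_mul, trace_stdBasis_mul]
      have hJM : trace (J * M) = b := by
        rw [hJdef, sub_mul, trace_sub, trace_stdBasis_mul, trace_stdBasis_mul, hbdef]
      have htr : trace (Qᵀ * M) = trace M + (c - 1) * a - s * b := by
        rw [hQt, sub_mul, add_mul, one_mul, smul_mul_assoc, smul_mul_assoc,
          trace_sub, trace_add, trace_smul, trace_smul, hPM, hJM, smul_eq_mul, smul_eq_mul]
      have := h Q hQorth
      rw [htr] at this
      linarith
    have hb0 : b = 0 := by
      by_contra hb
      have hb2 : 0 < b^2 := by positivity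
      have hr : (0:ℝ) < Real.sqrt (a^2 + b^2) := Real.sqrt_pos.mpr (by positivity)
      set r := Real.sqrt (a^2 + b^2) with hrdef
      have hrne : r ≠ 0 := ne_of_gt hr
      have hr2 : r^2 = a^2 + b^2 := Real.sq_sqrt (by positivity)
      have hcs : (a/r)^2 + (-b/r)^2 = 1 := by
        field_simp
        linarith [hr2]
      have h1 := main (a / r) (-b / r) hcs
      have h2 : a^2 + b^2 - r*a ≤ 0 := by
        have h3 := mul_le_mul_of_nonneg_left h1 hr.le
        have h4 : r * ((a/r - 1) * a - (-b/r) * b) = a^2 + b^2 - r*a := by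
          field_simp; ring
        rw [h4] at h3
        linarith
      nlinarith [hr2, h2, hb2, hr, sq_nonneg (a - r)]
    have : M i j - M j i = 0 := hb0
    linarith
  rw [posSemidef_iff_dotProduct_mulVec]
  constructor
  · ext i j
    simp only [conjTranspose_apply, star_trivial]
    exact hsymm i j
  · intro x
    simp only [star_trivial]
    rcases eq_or_ne x 0 with rfl | hx
    · simp
    have ht : (0:ℝ) < x ⬝ᵥ x := by
      rcases Function.ne_iff.mp hx with ⟨i, hi⟩
      have h0 : (0:ℝ) < x i * x i := mul_self_pos.mpr hi
      apply lt_of_lt_of_le h0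
      rw [dotProduct]
      exact Finset.single_le_sum (fun l _ => mul_self_nonneg (x l)) (Finset.mem_univ i)
    set t := x ⬝ᵥ x with htdef
    have hst : Real.sqrt t * Real.sqrt t = t := Real.mul_self_sqrt ht.le
    have hstpos : 0 < Real.sqrt t := Real.sqrt_pos.mpr ht
    set u : Fin k → ℝ := (Real.sqrt t)⁻¹ • x with hudef
    have hu : u ⬝ᵥ u = 1 := by
      rw [hudef, smul_dotProduct, dotProduct_smul, ← htdef]
      simp only [smul_eq_mul]
      field_simp
      rw [sq, hst]
    have hvv : (vecMulVec u u)ᵀ = vecMulVec u u := by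
      ext p q; simp [transpose_apply, vecMulVec_apply, mul_comm]
    have hmul : vecMulVec u u * vecMulVec u u = vecMulVec u u := by
      ext p q
      have hterm : ∀ l, u p * u l * (u l * u q) = (u p * u q) * (u l * u l) := by
        intro l; ring
      simp only [mul_apply, vecMulVec_apply, hterm, ← Finset.mul_sum]
      rw [show ∑ l, u l * u l = u ⬝ᵥ u from rfl, hu, mul_one]
    set Q : Matrix (Fin k) (Fin k) ℝ := 1 - (2:ℝ) • vecMulVec u u with hQdef
    have hQt : Qᵀ = Q := by simp [hQdef, transpose_sub, transpose_smul, hvv]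
    have hQorth : Qᵀ * Q = 1 := by
      rw [hQt, hQdef]
      have : (1 - (2:ℝ) • vecMulVec u u) * (1 - (2:ℝ) • vecMulVec u u)
          = 1 - (4:ℝ) • vecMulVec u u + (4:ℝ) • vecMulVec u u := by
        simp only [mul_sub, sub_mul, one_mul, mul_one, smul_mul_assoc, mul_smul_comm,
          smul_smul, hmul]
        module
      rw [this]; abel
    have htrv : trace (vecMulVec u u * M) = u ⬝ᵥ M *ᵥ u := by
      simp only [trace, diag_apply, mul_apply, vecMulVec_apply, dotProduct, mulVec]
      rw [Finset.sum_comm]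
      apply Finset.sum_congr rfl
      intro l _
      rw [Finset.mul_sum]
      apply Finset.sum_congr rfl
      intro p _
      ring
    have hkey := h Q hQorth
    rw [hQt, hQdef, sub_mul, one_mul, smul_mul_assoc, trace_sub, trace_smul, htrv,
      smul_eq_mul] at hkey
    have huMu : 0 ≤ u ⬝ᵥ M *ᵥ u := by linarith
    rw [hudef, smul_dotProduct, mulVec_smul, dotProduct_smul, smul_eq_mul, smul_eq_mul] at huMu
    have hrw : x ⬝ᵥ M *ᵥ x
        = (Real.sqrt t * Real.sqrt t) * ((Real.sqrt t)⁻¹ * ((Real.sqrt t)⁻¹ * (x ⬝ᵥ M *ᵥ x))) := by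
      field_simp
    rw [hrw]
    exact mul_nonneg (by positivity) huMu


/-- Theorem 2.8(a): if `X_opt` is a global maximizer of `f_θ` over the Stiefel manifold,
then `X_optᵀD` is symmetric positive semidefinite. -/
theorem stmt5 {n k : ℕ} (hk : 1 ≤ k) (hkn : k < n)
    (A B : Matrix (Fin n) (Fin n) ℝ) (hA : A.IsSymm) (hB : B.PosSemidef)
    (hrank : n - k < B.rank)
    (D : Matrix (Fin n) (Fin k) ℝ) (θ : ℝ) (hθ0 : 0 ≤ θ) (hθ1 : θ ≤ 1)
    (Xopt : Matrix (Fin n) (Fin k) ℝ) (hXopt : Xoptᵀ * Xopt = 1)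
    (hmax : ∀ Y : Matrix (Fin n) (Fin k) ℝ, Yᵀ * Y = 1 →
      fTheta A B D θ Y ≤ fTheta A B D θ Xopt) :
    (Xoptᵀ * D).PosSemidef := by
  have hct : ∀ {p q : ℕ} (Y : Matrix (Fin p) (Fin q) ℝ), Yᴴ = Yᵀ := by
    intro p q Y; ext a b; simp [conjTranspose_apply]
  -- trace positivity
  have tpos : 0 < trace (Xoptᵀ * B * Xopt) := by
    have hsq : CFC.sqrt B * CFC.sqrt B = B := CFC.sqrt_mul_sqrt_self B hB.nonneg
    have hCt : (CFC.sqrt B)ᵀ = CFC.sqrt B := by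
      rw [← hct]; exact (CFC.sqrt_nonneg B).posSemidef.isHermitian
    set C := CFC.sqrt B with hC
    set Y := C * Xopt with hY
    have htr : trace (Xoptᵀ * B * Xopt) = ∑ q, ∑ p, Y p q * Y p q := by
      have h1 : Xoptᵀ * B * Xopt = Yᵀ * Y := by
        rw [hY, transpose_mul, hCt, ← hsq,
          ← Matrix.mul_assoc Xoptᵀ C C, Matrix.mul_assoc (Xoptᵀ * C) C Xopt]
      rw [h1, trace]
      apply Finset.sum_congr rfl
      intro q _
      simp [diag_apply, mul_apply, transpose_apply]
    have hnn : 0 ≤ trace (Xoptᵀ * B * Xopt) := by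
      rw [htr]
      exact Finset.sum_nonneg fun q _ => Finset.sum_nonneg fun p _ => mul_self_nonneg _
    rcases hnn.lt_or_eq with hlt | heq
    · exact hlt
    exfalso
    -- trace = 0 ⇒ Y = 0 ⇒ B * Xopt = 0 ⇒ rank contradiction
    have hY0 : Y = 0 := by
      ext p q
      have h0 : ∑ q, ∑ p, Y p q * Y p q = 0 := by rw [← htr]; exact heq.symm
      have hz := (Finset.sum_eq_zero_iff_of_nonneg
        (fun q _ => Finset.sum_nonneg fun p _ => mul_self_nonneg (Y p q))).mp h0
      have hz2 := (Finset.sum_eq_zero_iff_of_nonneg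
        (fun p _ => mul_self_nonneg (Y p q))).mp (hz q (Finset.mem_univ q))
      have := hz2 p (Finset.mem_univ p)
      exact mul_self_eq_zero.mp this
    have hBX : B * Xopt = 0 := by
      rw [← hsq, Matrix.mul_assoc, ← hY, hY0, Matrix.mul_zero]
    -- rank argument
    have hinj : Function.Injective Xopt.mulVecLin := by
      have hcomp : Xoptᵀ.mulVecLin.comp Xopt.mulVecLin = LinearMap.id := by
        rw [← mulVecLin_mul, hXopt, mulVecLin_one]
      intro x y hxy
      have h1 : (Xoptᵀ.mulVecLin.comp Xopt.mulVecLin) x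
          = (Xoptᵀ.mulVecLin.comp Xopt.mulVecLin) y := by
        simp only [LinearMap.comp_apply, hxy]
      rw [hcomp] at h1
      simpa using h1
    have hrange : LinearMap.range Xopt.mulVecLin ≤ LinearMap.ker B.mulVecLin := by
      rintro _ ⟨x, rfl⟩
      rw [LinearMap.mem_ker]
      have h2 : B.mulVecLin (Xopt.mulVecLin x) = (B * Xopt).mulVecLin x := by
        rw [mulVecLin_mul]; rfl
      rw [h2, hBX, mulVecLin_zero, LinearMap.zero_apply]
    have hk' : k ≤ Module.finrank ℝ (LinearMap.ker B.mulVecLin) := by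
      have h1 := LinearMap.finrank_range_of_inj hinj
      rw [Module.finrank_fin_fun] at h1
      calc k = Module.finrank ℝ (LinearMap.range Xopt.mulVecLin) := h1.symm
        _ ≤ _ := Submodule.finrank_mono hrange
    have hrn : B.rank + Module.finrank ℝ (LinearMap.ker B.mulVecLin) = n := by
      have := LinearMap.finrank_range_add_finrank_ker B.mulVecLin
      rwa [Module.finrank_fin_fun] at this
    omega
  -- invariance under right multiplication by orthogonal Q
  apply key_psd
  intro Q hQ
  have hQQ : Q * Qᵀ = 1 := mul_eq_one_comm.mp hQ
  have hYst : (Xopt * Q)ᵀ * (Xopt * Q) = 1 := by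
    rw [transpose_mul, Matrix.mul_assoc, ← Matrix.mul_assoc Xoptᵀ, hXopt,
      Matrix.one_mul, hQ]
  have hY := hmax (Xopt * Q) hYst
  unfold fTheta at hY
  have e1 : trace ((Xopt * Q)ᵀ * A * (Xopt * Q)) = trace (Xoptᵀ * A * Xopt) := by
    rw [transpose_mul]
    have : Qᵀ * Xoptᵀ * A * (Xopt * Q) = Qᵀ * (Xoptᵀ * A * Xopt) * Q := by
      simp only [Matrix.mul_assoc]
    rw [this, trace_mul_cycle, hQQ, Matrix.one_mul]
  have e2 : trace ((Xopt * Q)ᵀ * B * (Xopt * Q)) = trace (Xoptᵀ * B * Xopt) := by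
    rw [transpose_mul]
    have : Qᵀ * Xoptᵀ * B * (Xopt * Q) = Qᵀ * (Xoptᵀ * B * Xopt) * Q := by
      simp only [Matrix.mul_assoc]
    rw [this, trace_mul_cycle, hQQ, Matrix.one_mul]
  have e3 : trace ((Xopt * Q)ᵀ * D) = trace (Qᵀ * (Xoptᵀ * D)) := by
    rw [transpose_mul, Matrix.mul_assoc]
  rw [e1, e2, e3] at hY
  have hd : (0:ℝ) < trace (Xoptᵀ * B * Xopt) ^ θ := Real.rpow_pos_of_pos tpos θ
  have := (div_le_div_iff_of_pos_right hd).mp hY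
  linarith

end
end

section
/- Let X ∈ 𝕆^{n×k} be an orthonormal basis matrix of the invariant subspace of E(X) associated with its k largest eigenvalues, i.e. E(X)·X = X·(Xᵀ E(X) X) and tr(Xᵀ E(X) X) = λ₁(E(X)) + ⋯ + λ_k(E(X)). Then for every X̃ ∈ 𝕆^{n×k}, g_θ(X̃) + tr(X̃ᵀ D Xᵀ X̃)/(tr(X̃ᵀBX̃))^θ ≤ f_θ(X) + γ, where γ = ((α + δ)/(β̃^θ β))·[(1−θ)β + θβ̃ − β^{1−θ} β̃^θ] with α = tr(XᵀAX), δ = tr(XᵀD), β = tr(XᵀBX), β̃ = tr(X̃ᵀBX̃). In particular, if D = 0 and θ ∈ {0,1}, then f_θ(X̃) ≤ f_θ(X) for every X̃ ∈ 𝕆^{n×k}, so X is a global maximizer of f_θ over 𝕆^{n×k}. -/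
open Matrix

noncomputable section

lemma aux_trace_pos {n k : ℕ} (hkn : k < n)
    (B : Matrix (Fin n) (Fin n) ℝ) (hB : B.PosSemidef) (hrank : n - k < B.rank)
    (X : Matrix (Fin n) (Fin k) ℝ) (hX : Xᵀ * X = 1) :
    0 < trace (Xᵀ * B * X) := by
  obtain ⟨C, hC⟩ : ∃ C : Matrix (Fin n) (Fin n) ℝ, B = Cᴴ * C := by
    open scoped MatrixOrder in exact CStarAlgebra.nonneg_iff_eq_star_mul_self.mp hB.nonneg
  have hCt : Cᴴ = Cᵀ := by ext i j; simp [conjTranspose_apply]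
  have key : trace (Xᵀ * B * X) = ∑ j : Fin k, ∑ i : Fin n, (C * X) i j ^ 2 := by
    rw [hC, hCt]
    have : Xᵀ * (Cᵀ * C) * X = (C * X)ᵀ * (C * X) := by
      rw [transpose_mul]; simp only [Matrix.mul_assoc]
    rw [this, Matrix.trace]
    simp [Matrix.mul_apply, diag, sq, mul_comm]
  have hnonneg : 0 ≤ trace (Xᵀ * B * X) := by
    rw [key]; positivity
  rcases hnonneg.lt_or_eq with h | h
  · exact h
  · exfalso
    have hCX : C * X = 0 := by
      ext i j
      have hsum : ∑ j : Fin k, ∑ i : Fin n, (C * X) i j ^ 2 = 0 := by rw [← key, ← h]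
      have := (Finset.sum_eq_zero_iff_of_nonneg (fun j _ => Finset.sum_nonneg fun i _ => sq_nonneg _)).mp hsum j (Finset.mem_univ j)
      have := (Finset.sum_eq_zero_iff_of_nonneg (fun i _ => sq_nonneg _)).mp this i (Finset.mem_univ i)
      simpa using pow_eq_zero_iff (n := 2) (by norm_num) |>.mp this
    have hBX : B * X = 0 := by rw [hC, hCt, Matrix.mul_assoc, hCX, Matrix.mul_zero]
    -- rank argument
    have hrX : k ≤ X.rank := by
      have h1 : (Xᵀ * X).rank ≤ X.rank := Matrix.rank_mul_le_right _ _
      rw [hX] at h1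
      simpa using h1
    have hle : LinearMap.range X.mulVecLin ≤ LinearMap.ker B.mulVecLin := by
      rintro v ⟨w, rfl⟩
      simp only [LinearMap.mem_ker]
      have : (B * X).mulVecLin w = 0 := by rw [hBX]; simp
      simpa [Matrix.mulVecLin_mul] using this
    have hdim : X.rank ≤ Module.finrank ℝ (LinearMap.ker B.mulVecLin) :=
      Submodule.finrank_mono hle
    have hrn : B.rank + Module.finrank ℝ (LinearMap.ker B.mulVecLin) = n := by
      have := LinearMap.finrank_range_add_finrank_ker B.mulVecLin
      simpa [Matrix.rank] using this
    omega

lemma aux_kyfan {n k : ℕ} (hk : 1 ≤ k) (hkn : k < n) (μ : Fin n → ℝ) (hμ : Antitone μ)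
    (Q : Matrix (Fin n) (Fin n) ℝ) (hQ : Qᵀ * Q = 1)
    (Xt : Matrix (Fin n) (Fin k) ℝ) (hXt : Xtᵀ * Xt = 1) :
    trace (Xtᵀ * (Q * Matrix.diagonal μ * Qᵀ) * Xt) ≤ ∑ i : Fin k, μ (Fin.castLE hkn.le i) := by
  have hQQ : Q * Qᵀ = 1 := mul_eq_one_comm.mp hQ
  set Y : Matrix (Fin n) (Fin k) ℝ := Qᵀ * Xt with hY
  have hYt : Yᵀ = Xtᵀ * Q := by rw [hY, transpose_mul, transpose_transpose]
  have hYY : Yᵀ * Y = 1 := by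
    rw [hYt, hY, Matrix.mul_assoc, ← Matrix.mul_assoc Q, hQQ, Matrix.one_mul, hXt]
  set P : Matrix (Fin n) (Fin n) ℝ := Y * Yᵀ with hPdef
  have hPP : P * P = P := by
    rw [hPdef, Matrix.mul_assoc, ← Matrix.mul_assoc Yᵀ, hYY, Matrix.one_mul]
  have hPsym : Pᵀ = P := by rw [hPdef, transpose_mul, transpose_transpose]
  have hs0 : ∀ i, 0 ≤ P i i := by
    intro i
    rw [hPdef]
    simp only [Matrix.mul_apply, transpose_apply]
    exact Finset.sum_nonneg fun j _ => mul_self_nonneg _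
  have hs1 : ∀ i, P i i ≤ 1 := by
    intro i
    have h1 : P i i = ∑ j, (P i j) ^ 2 := by
      conv_lhs => rw [← hPP]
      rw [Matrix.mul_apply]
      refine Finset.sum_congr rfl fun j _ => ?_
      have hij : P j i = P i j := by
        nth_rewrite 2 [← hPsym]
        rw [transpose_apply]
      rw [hij, ← sq]
    have h2 : (P i i) ^ 2 ≤ ∑ j, (P i j) ^ 2 :=
      Finset.single_le_sum (f := fun j => P i j ^ 2) (fun j _ => sq_nonneg _) (Finset.mem_univ i)
    nlinarith [hs0 i]
  have hsum : ∑ i, P i i = (k : ℝ) := by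
    have : ∑ i, P i i = trace P := rfl
    rw [this, hPdef, Matrix.trace_mul_comm, hYY, Matrix.trace_one]
    simp
  have htr : trace (Xtᵀ * (Q * Matrix.diagonal μ * Qᵀ) * Xt) = ∑ i, μ i * P i i := by
    have e : Xtᵀ * (Q * Matrix.diagonal μ * Qᵀ) * Xt = Yᵀ * (Matrix.diagonal μ * Y) := by
      rw [hYt, hY]; simp only [Matrix.mul_assoc]
    rw [e, Matrix.trace_mul_comm, Matrix.mul_assoc, ← hPdef]
    simp [Matrix.trace, Matrix.diag, Matrix.diagonal_mul]
  set c : ℝ := μ ⟨k - 1, by omega⟩ with hc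
  have key : ∀ i : Fin n, (μ i - c) * P i i ≤ (if (i : ℕ) < k then μ i - c else 0) := by
    intro i
    by_cases h : (i : ℕ) < k
    · have h1 : c ≤ μ i := hμ (by rw [Fin.le_def]; simp; omega)
      simp only [h, if_pos]
      calc (μ i - c) * P i i ≤ (μ i - c) * 1 :=
            mul_le_mul_of_nonneg_left (hs1 i) (by linarith)
        _ = μ i - c := mul_one _
    · have h1 : μ i ≤ c := hμ (by rw [Fin.le_def]; simp; omega)
      simp only [h, if_neg, not_false_iff]
      exact mul_nonpos_of_nonpos_of_nonneg (by linarith) (hs0 i)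
  have sumg : ∑ i : Fin n, (if (i : ℕ) < k then μ i - c else 0)
      = ∑ i : Fin k, (μ (Fin.castLE hkn.le i) - c) := by
    rw [← Finset.sum_filter]
    have hset : Finset.univ.filter (fun i : Fin n => (i : ℕ) < k)
        = Finset.map (Fin.castLEEmb hkn.le) Finset.univ := by
      ext i
      simp only [Finset.mem_filter, Finset.mem_univ, true_and, Finset.mem_map,
        Fin.castLEEmb, Function.Embedding.coeFn_mk]
      constructor
      · intro h; exact ⟨⟨i, h⟩, by simp [Fin.castLE]⟩
      · rintro ⟨j, rfl⟩; simpa using j.isLt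
    rw [hset, Finset.sum_map]
    rfl
  have e1 : ∑ i : Fin n, (μ i - c) * P i i = (∑ i, μ i * P i i) - c * k := by
    simp only [sub_mul]
    rw [Finset.sum_sub_distrib, ← Finset.mul_sum, hsum]
  have e2 : ∑ i : Fin k, (μ (Fin.castLE hkn.le i) - c)
      = (∑ i : Fin k, μ (Fin.castLE hkn.le i)) - c * k := by
    rw [Finset.sum_sub_distrib, Finset.sum_const]
    simp [mul_comm]
  have hle := Finset.sum_le_sum (fun i (_ : i ∈ Finset.univ) => key i)
  rw [htr]
  rw [sumg] at hle
  linarith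

lemma aux_traceE {n k : ℕ} (A B : Matrix (Fin n) (Fin n) ℝ) (D : Matrix (Fin n) (Fin k) ℝ)
    (θ : ℝ) (X Z : Matrix (Fin n) (Fin k) ℝ) :
    trace (Zᵀ * Emat A B D θ X * Z)
      = 2 / trace (Xᵀ * B * X) ^ θ *
        (trace (Zᵀ * A * Z) + trace (Zᵀ * D * Xᵀ * Z)
          - θ * f1 A B D X * trace (Zᵀ * B * Z)) := by
  have hsym : trace (Zᵀ * (X * Dᵀ) * Z) = trace (Zᵀ * (D * Xᵀ) * Z) := by
    rw [← Matrix.trace_transpose (Zᵀ * (X * Dᵀ) * Z)]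
    congr 1
    simp [transpose_mul, Matrix.mul_assoc]
  unfold Emat
  simp only [Matrix.mul_smul, Matrix.smul_mul, trace_smul, smul_eq_mul,
    Matrix.mul_sub, Matrix.sub_mul, Matrix.mul_add, Matrix.add_mul,
    trace_sub, trace_add]
  rw [hsym]
  rw [show Zᵀ * (D * Xᵀ) * Z = Zᵀ * D * Xᵀ * Z by simp only [Matrix.mul_assoc]]
  ring

/-- Theorem 2.9. -/
theorem stmt7 {n k : ℕ} (hk : 1 ≤ k) (hkn : k < n)
    (A B : Matrix (Fin n) (Fin n) ℝ) (hA : A.IsSymm) (hB : B.PosSemidef)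
    (hrank : n - k < B.rank)
    (D : Matrix (Fin n) (Fin k) ℝ) (θ : ℝ) (hθ0 : 0 ≤ θ) (hθ1 : θ ≤ 1)
    (X : Matrix (Fin n) (Fin k) ℝ) (hX : Xᵀ * X = 1)
    -- `μ 0 ≥ μ 1 ≥ ⋯ ≥ μ (n-1)` are the eigenvalues of the symmetric matrix `E(X)`
    (μ : Fin n → ℝ) (hμ : Antitone μ)
    (Q : Matrix (Fin n) (Fin n) ℝ) (hQ : Qᵀ * Q = 1)
    (hEig : Emat A B D θ X = Q * Matrix.diagonal μ * Qᵀ)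
    -- `X` is an orthonormal basis matrix of the invariant subspace of `E(X)` associated
    -- with its `k` largest eigenvalues:
    (hNEPv : Emat A B D θ X * X = X * (Xᵀ * Emat A B D θ X * X))
    (htop : trace (Xᵀ * Emat A B D θ X * X) = ∑ i : Fin k, μ (Fin.castLE hkn.le i)) :
    (∀ Xt : Matrix (Fin n) (Fin k) ℝ, Xtᵀ * Xt = 1 →
        gTheta A B θ Xt + trace (Xtᵀ * D * Xᵀ * Xt) / trace (Xtᵀ * B * Xt) ^ θ
          ≤ fTheta A B D θ X
            + (trace (Xᵀ * A * X) + trace (Xᵀ * D))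
                / (trace (Xtᵀ * B * Xt) ^ θ * trace (Xᵀ * B * X))
              * ((1 - θ) * trace (Xᵀ * B * X) + θ * trace (Xtᵀ * B * Xt)
                  - trace (Xᵀ * B * X) ^ (1 - θ) * trace (Xtᵀ * B * Xt) ^ θ))
      ∧ (D = 0 → θ = 0 ∨ θ = 1 →
          ∀ Xt : Matrix (Fin n) (Fin k) ℝ, Xtᵀ * Xt = 1 →
            fTheta A B D θ Xt ≤ fTheta A B D θ X) := by
  have hβ : 0 < trace (Xᵀ * B * X) := aux_trace_pos hkn B hB hrank X hX
  have part1 : ∀ Xt : Matrix (Fin n) (Fin k) ℝ, Xtᵀ * Xt = 1 →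
      gTheta A B θ Xt + trace (Xtᵀ * D * Xᵀ * Xt) / trace (Xtᵀ * B * Xt) ^ θ
        ≤ fTheta A B D θ X
          + (trace (Xᵀ * A * X) + trace (Xᵀ * D))
              / (trace (Xtᵀ * B * Xt) ^ θ * trace (Xᵀ * B * X))
            * ((1 - θ) * trace (Xᵀ * B * X) + θ * trace (Xtᵀ * B * Xt)
                - trace (Xᵀ * B * X) ^ (1 - θ) * trace (Xtᵀ * B * Xt) ^ θ) := by
    intro Xt hXt
    have hβt : 0 < trace (Xtᵀ * B * Xt) := aux_trace_pos hkn B hB hrank Xt hXt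
    set α : ℝ := trace (Xᵀ * A * X) with hα
    set δ : ℝ := trace (Xᵀ * D) with hδ
    set β : ℝ := trace (Xᵀ * B * X) with hβdef
    set αt : ℝ := trace (Xtᵀ * A * Xt) with hαt
    set dt : ℝ := trace (Xtᵀ * D * Xᵀ * Xt) with hdt
    set βt : ℝ := trace (Xtᵀ * B * Xt) with hβtdef
    have hp : (0:ℝ) < β ^ θ := Real.rpow_pos_of_pos hβ θ
    have hq : (0:ℝ) < βt ^ θ := Real.rpow_pos_of_pos hβt θ
    -- trace of E at X
    have hDX : Xᵀ * D * Xᵀ * X = Xᵀ * D := by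
      rw [Matrix.mul_assoc (Xᵀ * D), hX, Matrix.mul_one]
    have hXE : trace (Xᵀ * Emat A B D θ X * X) = 2 / β ^ θ * ((1 - θ) * (α + δ)) := by
      rw [aux_traceE, hDX]
      have : θ * f1 A B D X * trace (Xᵀ * B * X) = θ * (α + δ) := by
        rw [f1, ← hα, ← hδ, ← hβdef]
        field_simp
      rw [this, ← hα, ← hδ, ← hβdef]
      ring
    have hXtE : trace (Xtᵀ * Emat A B D θ X * Xt)
        = 2 / β ^ θ * (αt + dt - θ * ((α + δ) / β) * βt) := by
      rw [aux_traceE, f1, ← hα, ← hδ, ← hβdef, ← hαt, ← hdt, ← hβtdef]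
    -- Ky Fan
    have hKF : trace (Xtᵀ * Emat A B D θ X * Xt) ≤ trace (Xᵀ * Emat A B D θ X * X) := by
      rw [htop, hEig]
      exact aux_kyfan hk hkn μ hμ Q hQ Xt hXt
    rw [hXE, hXtE] at hKF
    have hc : (0:ℝ) < 2 / β ^ θ := by positivity
    have hmain : αt + dt - θ * ((α + δ) / β) * βt ≤ (1 - θ) * (α + δ) :=
      le_of_mul_le_mul_left (by rw [mul_comm (2 / β ^ θ)] at hKF ⊢; exact hKF) hc
    have h3 : αt + dt ≤ (α + δ) * ((1 - θ) * β + θ * βt) / β := by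
      rw [le_div_iff₀ hβ]
      have h := mul_le_mul_of_nonneg_right hmain hβ.le
      have hcan : θ * ((α + δ) / β) * βt * β = θ * (α + δ) * βt := by
        field_simp
      nlinarith [h, hcan]
    have hrw : β ^ (1 - θ) = β / β ^ θ := by
      rw [Real.rpow_sub hβ, Real.rpow_one]
    show αt / βt ^ θ + dt / βt ^ θ ≤ (α + δ) / β ^ θ
        + (α + δ) / (βt ^ θ * β) * ((1 - θ) * β + θ * βt - β ^ (1 - θ) * βt ^ θ)
    have step2 : (αt + dt) / βt ^ θ ≤ (α + δ) * ((1 - θ) * β + θ * βt) / β / βt ^ θ := by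
      have := mul_le_mul_of_nonneg_right h3 (inv_nonneg.mpr hq.le)
      simpa [div_eq_mul_inv] using this
    calc αt / βt ^ θ + dt / βt ^ θ = (αt + dt) / βt ^ θ := by rw [← add_div]
      _ ≤ (α + δ) * ((1 - θ) * β + θ * βt) / β / βt ^ θ := step2
      _ = (α + δ) / β ^ θ
          + (α + δ) / (βt ^ θ * β) * ((1 - θ) * β + θ * βt - β ^ (1 - θ) * βt ^ θ) := by
        rw [hrw]
        field_simp
        ring
  refine ⟨part1, ?_⟩
  intro hD hcase Xt hXt
  have h1 := part1 Xt hXt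
  subst hD
  rcases hcase with rfl | rfl
  · simp only [fTheta, gTheta, Matrix.mul_zero, Matrix.zero_mul, trace_zero,
      add_zero, zero_div] at h1 ⊢
    norm_num [Real.rpow_zero, Real.rpow_one] at h1 ⊢
    linarith
  · simp only [fTheta, gTheta, Matrix.mul_zero, Matrix.zero_mul, trace_zero,
      add_zero, zero_div] at h1 ⊢
    norm_num [Real.rpow_zero, Real.rpow_one] at h1 ⊢
    linarith


end
end

section
/- Let D ∈ ℝ^{n×k} and let X_*, X̃_* ∈ 𝕆^{n×k} have the same column space. Let X_*ᵀD = U₁Σ₁V₁ᵀ and X̃_*ᵀD = U₂Σ₂V₂ᵀ be any singular value decompositions (with singular values arranged in nonincreasing order), and let r = rank(X_*ᵀD) (= rank(X̃_*ᵀD)). Then X_* (U₁)_{(:,1:r)} (V₁)_{(:,1:r)}ᵀ = X̃_* (U₂)_{(:,1:r)} (V₂)_{(:,1:r)}ᵀ; that is, the matrix X_* U_{(:,1:r)} V_{(:,1:r)}ᵀ depends only on the column space of X_* (and on D), not on the choice of orthonormal basis matrix X_* or of the SVD. -/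
open Matrix

/-- Columns `1:r` of a `k×k` matrix. -/
def colsFirst {k : ℕ} (M : Matrix (Fin k) (Fin k) ℝ) (r : ℕ) (h : r ≤ k) :
    Matrix (Fin k) (Fin r) ℝ :=
  M.submatrix id fun i => Fin.castLE h i

section Aux

variable {k : ℕ}

/-- transpose of a conjugation by a diagonal. -/
lemma aux_conj_transpose (V : Matrix (Fin k) (Fin k) ℝ) (c : Fin k → ℝ) :
    (V * diagonal c * Vᵀ)ᵀ = V * diagonal c * Vᵀ := by
  rw [transpose_mul, transpose_mul, transpose_transpose, diagonal_transpose, Matrix.mul_assoc]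

lemma aux_sandwich (U V W : Matrix (Fin k) (Fin k) ℝ) (hV : Vᵀ * V = 1)
    (a b : Fin k → ℝ) :
    (U * diagonal a * Vᵀ) * (V * diagonal b * Wᵀ)
      = U * diagonal (fun i => a i * b i) * Wᵀ := by
  have : (U * diagonal a * Vᵀ) * (V * diagonal b * Wᵀ)
      = U * (diagonal a * ((Vᵀ * V) * diagonal b)) * Wᵀ := by
    simp only [Matrix.mul_assoc]
  rw [this, hV, Matrix.one_mul, diagonal_mul_diagonal]

/-- Uniqueness of the Moore–Penrose inverse. -/
lemma aux_mp_unique (T N N' : Matrix (Fin k) (Fin k) ℝ)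
    (h1 : T * N * T = T) (h2 : N * T * N = N)
    (h3 : (T * N)ᵀ = T * N) (h4 : (N * T)ᵀ = N * T)
    (h1' : T * N' * T = T) (h2' : N' * T * N' = N')
    (h3' : (T * N')ᵀ = T * N') (h4' : (N' * T)ᵀ = N' * T) : N = N' := by
  have ha : T * N = (T * N') * (T * N) := by
    conv_lhs => rw [← h1']
    simp only [Matrix.mul_assoc]
  have hb : T * N' = (T * N) * (T * N') := by
    conv_lhs => rw [← h1]
    simp only [Matrix.mul_assoc]
  have hTN : T * N = T * N' := by
    calc T * N = (T * N)ᵀ := h3.symm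
    _ = ((T * N') * (T * N))ᵀ := by rw [← ha]
    _ = (T * N)ᵀ * (T * N')ᵀ := by rw [transpose_mul]
    _ = (T * N) * (T * N') := by rw [h3, h3']
    _ = T * N' := hb.symm
  have hc : N * T = (N * T) * (N' * T) := by
    conv_lhs => rw [← h1']
    simp only [Matrix.mul_assoc]
  have hd : N' * T = (N' * T) * (N * T) := by
    conv_lhs => rw [← h1]
    simp only [Matrix.mul_assoc]
  have hNT : N * T = N' * T := by
    calc N * T = (N * T)ᵀ := h4.symm
    _ = ((N * T) * (N' * T))ᵀ := by rw [← hc]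
    _ = (N' * T)ᵀ * (N * T)ᵀ := by rw [transpose_mul]
    _ = (N' * T) * (N * T) := by rw [h4, h4']
    _ = N' * T := hd.symm
  calc N = N * T * N := h2.symm
  _ = N * (T * N') := by rw [Matrix.mul_assoc, hTN]
  _ = (N * T) * N' := by rw [Matrix.mul_assoc]
  _ = (N' * T) * N' := by rw [hNT]
  _ = N' := h2'

/-- For an antitone nonnegative vector whose support has `r` elements, the support is exactly
the first `r` indices. -/
lemma aux_support {r : ℕ} (σ : Fin k → ℝ) (hm : Antitone σ) (hp : ∀ i, 0 ≤ σ i)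
    (hc : (Finset.univ.filter fun i => σ i ≠ 0).card = r) :
    ∀ i : Fin k, σ i ≠ 0 ↔ (i : ℕ) < r := by
  intro i
  constructor
  · intro h
    have hpos : 0 < σ i := lt_of_le_of_ne (hp i) (Ne.symm h)
    have hsub : Finset.Iic i ⊆ Finset.univ.filter fun j => σ j ≠ 0 := by
      intro j hj
      simp only [Finset.mem_Iic] at hj
      simp only [Finset.mem_filter, Finset.mem_univ, true_and]
      exact ne_of_gt (lt_of_lt_of_le hpos (hm hj))
    have := Finset.card_le_card hsub
    rw [Fin.card_Iic, hc] at this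
    omega
  · intro h
    by_contra h0
    have hsub : (Finset.univ.filter fun j => σ j ≠ 0) ⊆ Finset.Iio i := by
      intro j hj
      simp only [Finset.mem_filter, Finset.mem_univ, true_and] at hj
      simp only [Finset.mem_Iio]
      by_contra hij
      push_neg at hij
      exact hj (le_antisymm (h0 ▸ hm hij) (hp j))
    have := Finset.card_le_card hsub
    rw [Fin.card_Iio, hc] at this
    omega

lemma aux_colsFirst_mul {r : ℕ} (U V : Matrix (Fin k) (Fin k) ℝ) (h : r ≤ k) :
    colsFirst U r h * (colsFirst V r h)ᵀ
      = U * diagonal (fun l : Fin k => if (l : ℕ) < r then (1:ℝ) else 0) * Vᵀ := by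
  ext i j
  rw [Matrix.mul_apply, Matrix.mul_apply]
  simp only [colsFirst, submatrix_apply, transpose_apply, mul_diagonal, id_eq]
  have hR : ∀ l : Fin k, U i l * (if (l : ℕ) < r then (1:ℝ) else 0) * V j l
      = if (l : ℕ) < r then U i l * V j l else 0 := by
    intro l; split <;> ring
  simp only [hR]
  rw [← Finset.sum_filter]
  refine Finset.sum_bij' (fun (l : Fin r) (_ : l ∈ Finset.univ) => Fin.castLE h l)
    (fun (l : Fin k) (hl : l ∈ Finset.filter (fun x : Fin k => (x : ℕ) < r) Finset.univ) =>
      (⟨(l : ℕ), by simpa using hl⟩ : Fin r)) ?_ ?_ ?_ ?_ ?_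
  · intro a _; simp [a.isLt]
  · intro a _; exact Finset.mem_univ _
  · intro a _; rfl
  · intro a _; rfl
  · intro a _; rfl

lemma aux_fix {n : ℕ} (Xs Xts : Matrix (Fin n) (Fin k) ℝ)
    (hXs : Xsᵀ * Xs = 1)
    (hle : LinearMap.range Xts.mulVecLin ≤ LinearMap.range Xs.mulVecLin) :
    Xs * Xsᵀ * Xts = Xts := by
  have hex : ∀ v : Fin k → ℝ, ∃ w, Xs.mulVec w = Xts.mulVec v := by
    intro v
    have : Xts.mulVec v ∈ LinearMap.range Xs.mulVecLin := hle ⟨v, rfl⟩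
    obtain ⟨w, hw⟩ := this
    exact ⟨w, hw⟩
  choose w hw using hex
  have hC : Xts = Xs * (Matrix.of fun i j => w (Pi.single j 1) i) := by
    ext a b
    have h1 := congrFun (hw (Pi.single b 1)) a
    have h2 : Xts.mulVec (Pi.single b 1) a = Xts a b := by
      simp [Matrix.mulVec, dotProduct, Pi.single_apply]
    rw [h2] at h1
    rw [Matrix.mul_apply, ← h1]
    simp [Matrix.mulVec, dotProduct]
  conv_lhs => rw [hC]
  rw [Matrix.mul_assoc, ← Matrix.mul_assoc Xsᵀ, hXs, Matrix.one_mul, ← hC]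

lemma aux_proj_eq {n : ℕ} (Xs Xts : Matrix (Fin n) (Fin k) ℝ)
    (hXs : Xsᵀ * Xs = 1) (hXts : Xtsᵀ * Xts = 1)
    (hrange : LinearMap.range Xs.mulVecLin = LinearMap.range Xts.mulVecLin) :
    Xs * Xsᵀ = Xts * Xtsᵀ := by
  have hPX : Xs * Xsᵀ * Xts = Xts := aux_fix Xs Xts hXs hrange.ge
  have hQX : Xts * Xtsᵀ * Xs = Xs := aux_fix Xts Xs hXts hrange.le
  have hPs : (Xs * Xsᵀ)ᵀ = Xs * Xsᵀ := by rw [transpose_mul, transpose_transpose]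
  have hQs : (Xts * Xtsᵀ)ᵀ = Xts * Xtsᵀ := by rw [transpose_mul, transpose_transpose]
  have h1 : Xtsᵀ * (Xs * Xsᵀ) = Xtsᵀ := by
    have := congrArg Matrix.transpose hPX
    rwa [transpose_mul, hPs] at this
  have h2 : Xsᵀ * (Xts * Xtsᵀ) = Xsᵀ := by
    have := congrArg Matrix.transpose hQX
    rwa [transpose_mul, hQs] at this
  have hQP : (Xts * Xtsᵀ) * (Xs * Xsᵀ) = Xts * Xtsᵀ := by
    rw [Matrix.mul_assoc, h1]
  have hPQ : (Xs * Xsᵀ) * (Xts * Xtsᵀ) = Xs * Xsᵀ := by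
    rw [Matrix.mul_assoc, h2]
  calc Xs * Xsᵀ = (Xs * Xsᵀ) * (Xts * Xtsᵀ) := hPQ.symm
  _ = ((Xts * Xtsᵀ) * (Xs * Xsᵀ))ᵀ := by rw [transpose_mul, hPs, hQs]
  _ = (Xts * Xtsᵀ)ᵀ := by rw [hQP]
  _ = Xts * Xtsᵀ := hQs

end Aux

/-- The matrix `X_* U_{(:,1:r)} V_{(:,1:r)}ᵀ` built from an SVD of `X_*ᵀD` depends only on
the column space of `X_*` (and on `D`). -/
theorem stmt11 {n k : ℕ} (hk : 1 ≤ k) (hkn : k < n)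
    (D : Matrix (Fin n) (Fin k) ℝ)
    (Xs Xts : Matrix (Fin n) (Fin k) ℝ) (hXs : Xsᵀ * Xs = 1) (hXts : Xtsᵀ * Xts = 1)
    (hrange : LinearMap.range Xs.mulVecLin = LinearMap.range Xts.mulVecLin)
    (U₁ V₁ U₂ V₂ : Matrix (Fin k) (Fin k) ℝ)
    (hU₁ : U₁ᵀ * U₁ = 1) (hV₁ : V₁ᵀ * V₁ = 1) (hU₂ : U₂ᵀ * U₂ = 1) (hV₂ : V₂ᵀ * V₂ = 1)
    (σ₁ σ₂ : Fin k → ℝ)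
    (hσ₁mono : Antitone σ₁) (hσ₁pos : ∀ i, 0 ≤ σ₁ i)
    (hσ₂mono : Antitone σ₂) (hσ₂pos : ∀ i, 0 ≤ σ₂ i)
    (hSVD₁ : Xsᵀ * D = U₁ * Matrix.diagonal σ₁ * V₁ᵀ)
    (hSVD₂ : Xtsᵀ * D = U₂ * Matrix.diagonal σ₂ * V₂ᵀ)
    (r : ℕ) (hr : r = (Xsᵀ * D).rank) (hr' : (Xtsᵀ * D).rank = r) (hrk : r ≤ k) :
    Xs * colsFirst U₁ r hrk * (colsFirst V₁ r hrk)ᵀ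
      = Xts * colsFirst U₂ r hrk * (colsFirst V₂ r hrk)ᵀ := by
  -- determinants of the orthogonal factors are units
  have hdet : ∀ W : Matrix (Fin k) (Fin k) ℝ, Wᵀ * W = 1 → IsUnit W.det := by
    intro W hW
    have : W.det * W.det = 1 := by
      have := congrArg Matrix.det hW
      rwa [Matrix.det_mul, Matrix.det_transpose, Matrix.det_one] at this
    exact IsUnit.of_mul_eq_one _ this
  have hdetU₁ := hdet U₁ hU₁
  have hdetV₁ := hdet V₁ hV₁
  have hdetU₂ := hdet U₂ hU₂
  have hdetV₂ := hdet V₂ hV₂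
  have hdetV₁t : IsUnit (V₁ᵀ).det := by rwa [Matrix.det_transpose]
  have hdetV₂t : IsUnit (V₂ᵀ).det := by rwa [Matrix.det_transpose]
  -- supports of σ₁, σ₂ are exactly the first r indices
  have hcard : ∀ (U V : Matrix (Fin k) (Fin k) ℝ) (σ : Fin k → ℝ),
      IsUnit U.det → IsUnit (Vᵀ).det →
      (U * Matrix.diagonal σ * Vᵀ).rank = (Finset.univ.filter fun i => σ i ≠ 0).card := by
    intro U V σ hU hV
    rw [rank_mul_eq_left_of_isUnit_det _ _ hV, rank_mul_eq_right_of_isUnit_det _ _ hU,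
      Matrix.rank_diagonal, Fintype.card_subtype]
  have hrank₁ : (Finset.univ.filter fun i => σ₁ i ≠ 0).card = r := by
    rw [← hcard U₁ V₁ σ₁ hdetU₁ hdetV₁t, ← hSVD₁]; omega
  have hrank₂ : (Finset.univ.filter fun i => σ₂ i ≠ 0).card = r := by
    rw [← hcard U₂ V₂ σ₂ hdetU₂ hdetV₂t, ← hSVD₂]; exact hr'
  have hsupp₁ := aux_support σ₁ hσ₁mono hσ₁pos hrank₁
  have hsupp₂ := aux_support σ₂ hσ₂mono hσ₂pos hrank₂
  have hσid : ∀ (σ : Fin k → ℝ), (∀ i, σ i ≠ 0 ↔ (i : ℕ) < r) →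
      (fun i => σ i * (σ i)⁻¹) = fun l : Fin k => if (l : ℕ) < r then (1:ℝ) else 0 := by
    intro σ hs
    funext i
    by_cases h : σ i = 0
    · simp [h, (not_iff_not.mpr (hs i)).mp (not_not.mpr h)]
    · rw [mul_inv_cancel₀ h, if_pos ((hs i).mp h)]
  -- the common Gram matrix S and its PSD square root
  have hproj : Xs * Xsᵀ = Xts * Xtsᵀ := aux_proj_eq Xs Xts hXs hXts hrange
  set S : Matrix (Fin k) (Fin k) ℝ := (Xsᵀ * D)ᵀ * (Xsᵀ * D) with hSdef
  have hStilde : S = (Xtsᵀ * D)ᵀ * (Xtsᵀ * D) := by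
    rw [hSdef, transpose_mul, transpose_transpose, transpose_mul, transpose_transpose]
    calc Dᵀ * Xs * (Xsᵀ * D) = Dᵀ * (Xs * Xsᵀ) * D := by simp only [Matrix.mul_assoc]
    _ = Dᵀ * (Xts * Xtsᵀ) * D := by rw [hproj]
    _ = Dᵀ * Xts * (Xtsᵀ * D) := by simp only [Matrix.mul_assoc]
  have hSpsd : PosSemidef S := by
    have := posSemidef_conjTranspose_mul_self (Xsᵀ * D)
    rwa [conjTranspose_eq_transpose_of_trivial] at this
  have htr : ∀ (U V : Matrix (Fin k) (Fin k) ℝ) (σ : Fin k → ℝ),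
      (U * Matrix.diagonal σ * Vᵀ)ᵀ = V * Matrix.diagonal σ * Uᵀ := by
    intro U V σ
    rw [transpose_mul, transpose_mul, transpose_transpose, diagonal_transpose,
      Matrix.mul_assoc]
  have hSd₁ : S = V₁ * Matrix.diagonal (fun i => σ₁ i * σ₁ i) * V₁ᵀ := by
    rw [hSdef, hSVD₁, htr U₁ V₁ σ₁, aux_sandwich V₁ U₁ V₁ hU₁]
  have hSd₂ : S = V₂ * Matrix.diagonal (fun i => σ₂ i * σ₂ i) * V₂ᵀ := by
    rw [hStilde, hSVD₂, htr U₂ V₂ σ₂, aux_sandwich V₂ U₂ V₂ hU₂]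
  -- the two candidate square roots agree
  have hTpsd : ∀ (V : Matrix (Fin k) (Fin k) ℝ) (σ : Fin k → ℝ), (∀ i, 0 ≤ σ i) →
      PosSemidef (V * Matrix.diagonal σ * Vᵀ) := by
    intro V σ hσ
    have hd : PosSemidef (Matrix.diagonal σ) := posSemidef_diagonal_iff.mpr hσ
    have := hd.mul_mul_conjTranspose_same V
    rwa [conjTranspose_eq_transpose_of_trivial] at this
  have hT₁psd := hTpsd V₁ σ₁ hσ₁pos
  have hT₂psd := hTpsd V₂ σ₂ hσ₂pos
  have hT₁sq : (V₁ * Matrix.diagonal σ₁ * V₁ᵀ) ^ 2 = S := by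
    rw [pow_two, aux_sandwich V₁ V₁ V₁ hV₁, hSd₁]
  have hT₂sq : (V₂ * Matrix.diagonal σ₂ * V₂ᵀ) ^ 2 = S := by
    rw [pow_two, aux_sandwich V₂ V₂ V₂ hV₂, hSd₂]
  have hT : V₁ * Matrix.diagonal σ₁ * V₁ᵀ = V₂ * Matrix.diagonal σ₂ * V₂ᵀ := by
    open MatrixOrder in
    exact (CFC.sq_eq_sq_iff _ _ hT₁psd.nonneg hT₂psd.nonneg).mp (hT₁sq.trans hT₂sq.symm)
  -- Moore–Penrose conditions
  have hmp : ∀ (V : Matrix (Fin k) (Fin k) ℝ) (σ : Fin k → ℝ), Vᵀ * V = 1 →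
      (V * Matrix.diagonal σ * Vᵀ) * (V * Matrix.diagonal (fun i => (σ i)⁻¹) * Vᵀ) *
          (V * Matrix.diagonal σ * Vᵀ) = V * Matrix.diagonal σ * Vᵀ
      ∧ (V * Matrix.diagonal (fun i => (σ i)⁻¹) * Vᵀ) * (V * Matrix.diagonal σ * Vᵀ) *
          (V * Matrix.diagonal (fun i => (σ i)⁻¹) * Vᵀ)
          = V * Matrix.diagonal (fun i => (σ i)⁻¹) * Vᵀ
      ∧ ((V * Matrix.diagonal σ * Vᵀ) * (V * Matrix.diagonal (fun i => (σ i)⁻¹) * Vᵀ))ᵀ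
          = (V * Matrix.diagonal σ * Vᵀ) * (V * Matrix.diagonal (fun i => (σ i)⁻¹) * Vᵀ)
      ∧ ((V * Matrix.diagonal (fun i => (σ i)⁻¹) * Vᵀ) * (V * Matrix.diagonal σ * Vᵀ))ᵀ
          = (V * Matrix.diagonal (fun i => (σ i)⁻¹) * Vᵀ) * (V * Matrix.diagonal σ * Vᵀ) := by
    intro V σ hV
    have e1 : (fun i => σ i * (σ i)⁻¹ * σ i) = σ := by
      funext i; by_cases h : σ i = 0 <;> simp [h]
    have e2 : (fun i => (σ i)⁻¹ * σ i * (σ i)⁻¹) = fun i => (σ i)⁻¹ := by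
      funext i; by_cases h : σ i = 0 <;> simp [h]
    refine ⟨?_, ?_, ?_, ?_⟩
    · rw [aux_sandwich V V V hV, aux_sandwich V V V hV, e1]
    · rw [aux_sandwich V V V hV, aux_sandwich V V V hV, e2]
    · rw [aux_sandwich V V V hV, aux_conj_transpose]
    · rw [aux_sandwich V V V hV, aux_conj_transpose]
  obtain ⟨ha1, ha2, ha3, ha4⟩ := hmp V₁ σ₁ hV₁
  obtain ⟨hb1, hb2, hb3, hb4⟩ := hmp V₂ σ₂ hV₂
  rw [← hT] at hb1 hb2 hb3 hb4
  have hN : V₁ * Matrix.diagonal (fun i => (σ₁ i)⁻¹) * V₁ᵀ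
      = V₂ * Matrix.diagonal (fun i => (σ₂ i)⁻¹) * V₂ᵀ :=
    aux_mp_unique (V₁ * Matrix.diagonal σ₁ * V₁ᵀ) _ _ ha1 ha2 ha3 ha4 hb1 hb2 hb3 hb4
  -- final assembly
  calc Xs * colsFirst U₁ r hrk * (colsFirst V₁ r hrk)ᵀ
      = Xs * (colsFirst U₁ r hrk * (colsFirst V₁ r hrk)ᵀ) := by rw [Matrix.mul_assoc]
  _ = Xs * (U₁ * Matrix.diagonal (fun i => σ₁ i * (σ₁ i)⁻¹) * V₁ᵀ) := by
      rw [aux_colsFirst_mul, hσid σ₁ hsupp₁]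
  _ = Xs * ((U₁ * Matrix.diagonal σ₁ * V₁ᵀ) *
        (V₁ * Matrix.diagonal (fun i => (σ₁ i)⁻¹) * V₁ᵀ)) := by
      rw [aux_sandwich U₁ V₁ V₁ hV₁]
  _ = Xs * Xsᵀ * D * (V₁ * Matrix.diagonal (fun i => (σ₁ i)⁻¹) * V₁ᵀ) := by
      rw [← hSVD₁]; simp only [Matrix.mul_assoc]
  _ = Xts * Xtsᵀ * D * (V₂ * Matrix.diagonal (fun i => (σ₂ i)⁻¹) * V₂ᵀ) := by
      rw [hproj, hN]
  _ = Xts * ((U₂ * Matrix.diagonal σ₂ * V₂ᵀ) *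
        (V₂ * Matrix.diagonal (fun i => (σ₂ i)⁻¹) * V₂ᵀ)) := by
      rw [← hSVD₂]; simp only [Matrix.mul_assoc]
  _ = Xts * (U₂ * Matrix.diagonal (fun i => σ₂ i * (σ₂ i)⁻¹) * V₂ᵀ) := by
      rw [aux_sandwich U₂ V₂ V₂ hV₂]
  _ = Xts * (colsFirst U₂ r hrk * (colsFirst V₂ r hrk)ᵀ) := by
      rw [aux_colsFirst_mul, hσid σ₂ hsupp₂]
  _ = Xts * colsFirst U₂ r hrk * (colsFirst V₂ r hrk)ᵀ := by rw [Matrix.mul_assoc]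
end

section
/- Let X_* ∈ 𝕆^{n×k} with rank(X_*ᵀD) = k. Then the problem max_{Q ∈ 𝕆^{k×k}} f_θ(X_*Q) has a unique maximizer; equivalently, among all X ∈ 𝕆^{n×k} with the same column space as X_*, there is exactly one maximizer of f_θ. -/
open Matrix

noncomputable section

section aux

open scoped MatrixOrder in
lemma psd_sqrt_exists {k : ℕ} (A : Matrix (Fin k) (Fin k) ℝ) (hA : A.PosSemidef) :
    ∃ S : Matrix (Fin k) (Fin k) ℝ, S.PosSemidef ∧ S * S = A :=
  ⟨CFC.sqrt A, (CFC.sqrt_nonneg A).posSemidef, CFC.sqrt_mul_sqrt_self A hA.nonneg⟩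

lemma frob_expand {m l : Type*} [Fintype m] [Fintype l] (M : Matrix m l ℝ) :
    trace (Mᵀ * M) = ∑ i, ∑ j, M j i ^ 2 := by
  simp [Matrix.trace, Matrix.mul_apply, Matrix.diag, sq]

lemma frob_nonneg {m l : Type*} [Fintype m] [Fintype l] (M : Matrix m l ℝ) :
    0 ≤ trace (Mᵀ * M) := by
  rw [frob_expand]
  positivity

lemma frob_eq_zero {m l : Type*} [Fintype m] [Fintype l] (M : Matrix m l ℝ)
    (h : trace (Mᵀ * M) = 0) : M = 0 := by
  rw [frob_expand] at h
  ext i j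
  have h1 := (Finset.sum_eq_zero_iff_of_nonneg (fun i _ => Finset.sum_nonneg
    (fun j _ => sq_nonneg (M j i)))).mp h j (Finset.mem_univ j)
  have h2 := (Finset.sum_eq_zero_iff_of_nonneg (fun a _ => sq_nonneg (M a j))).mp h1 i
    (Finset.mem_univ i)
  have := pow_eq_zero_iff (n := 2) (by norm_num) |>.mp h2
  simpa using this

/-- Core inequality: for `P = S * S` with `S` symmetric invertible, and `R` orthogonal,
`tr(R P) ≤ tr P`, with equality only when `R = 1`. -/
lemma trace_mul_le_of_orth {k : ℕ} (P S R : Matrix (Fin k) (Fin k) ℝ)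
    (hSt : Sᵀ = S) (hSS : S * S = P) (hSdet : IsUnit S.det)
    (hR : Rᵀ * R = 1) :
    trace (R * P) ≤ trace P ∧ (trace (R * P) = trace P → R = 1) := by
  have hPt : Pᵀ = P := by rw [← hSS, Matrix.transpose_mul, hSt]
  set M := S - R * S with hM
  have hMt : Mᵀ = S - S * Rᵀ := by
    rw [hM, Matrix.transpose_sub, Matrix.transpose_mul, hSt]
  have hexp : Mᵀ * M = P - S * (R * S) - S * Rᵀ * S + P := by
    rw [hMt, hM]
    have h1 : S * Rᵀ * (R * S) = P := by
      calc S * Rᵀ * (R * S) = S * ((Rᵀ * R) * S) := by noncomm_ring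
      _ = P := by rw [hR, Matrix.one_mul, hSS]
    calc (S - S * Rᵀ) * (S - R * S)
        = S * S - S * (R * S) - S * Rᵀ * S + S * Rᵀ * (R * S) := by noncomm_ring
      _ = P - S * (R * S) - S * Rᵀ * S + P := by rw [hSS, h1]
  have htr1 : trace (S * (R * S)) = trace (R * P) := by
    rw [Matrix.trace_mul_comm, Matrix.mul_assoc, hSS]
  have htr2 : trace (S * Rᵀ * S) = trace (R * P) := by
    rw [Matrix.trace_mul_comm, ← Matrix.mul_assoc, hSS,
      ← Matrix.trace_transpose (P * Rᵀ), Matrix.transpose_mul,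
      Matrix.transpose_transpose, hPt]
  have hkey : trace (Mᵀ * M) = 2 * (trace P - trace (R * P)) := by
    rw [hexp, Matrix.trace_add, Matrix.trace_sub, Matrix.trace_sub, htr1, htr2]
    ring
  have h0 : 0 ≤ trace (Mᵀ * M) := frob_nonneg M
  constructor
  · linarith
  · intro heq
    have hM0 : M = 0 := frob_eq_zero M (by rw [hkey, heq]; ring)
    have hRS : R * S = S := by
      have := sub_eq_zero.mp hM0
      exact this.symm
    calc R = R * (S * S⁻¹) := by rw [Matrix.mul_nonsing_inv S hSdet, Matrix.mul_one]
      _ = (R * S) * S⁻¹ := by rw [Matrix.mul_assoc]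
      _ = S * S⁻¹ := by rw [hRS]
      _ = 1 := Matrix.mul_nonsing_inv S hSdet

/-- Orthogonal Procrustes: for invertible `C`, the map `Q ↦ tr(Qᵀ C)` has a unique
maximizer over the orthogonal group. -/
lemma procrustes {k : ℕ} (C : Matrix (Fin k) (Fin k) ℝ) (hC : IsUnit C.det) :
    ∃! Q : Matrix (Fin k) (Fin k) ℝ, Qᵀ * Q = 1 ∧
      ∀ Q' : Matrix (Fin k) (Fin k) ℝ, Q'ᵀ * Q' = 1 →
        trace (Q'ᵀ * C) ≤ trace (Qᵀ * C) := by
  have hCTC : (Cᵀ * C).PosSemidef := by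
    simpa [Matrix.conjTranspose_eq_transpose_of_trivial] using
      Matrix.posSemidef_conjTranspose_mul_self C
  obtain ⟨P, hPpsd, hPP⟩ := psd_sqrt_exists (Cᵀ * C) hCTC
  have hPt : Pᵀ = P := by
    rw [← Matrix.conjTranspose_eq_transpose_of_trivial]; exact hPpsd.1
  have hdetPP : P.det * P.det = C.det * C.det := by
    rw [← Matrix.det_mul, hPP, Matrix.det_mul, Matrix.det_transpose]
  have hPdet : IsUnit P.det := by
    refine isUnit_of_mul_isUnit_left (y := P.det) ?_
    rw [hdetPP]; exact hC.mul hC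
  obtain ⟨S, hSpsd, hSS⟩ := psd_sqrt_exists P hPpsd
  have hSt : Sᵀ = S := by
    rw [← Matrix.conjTranspose_eq_transpose_of_trivial]; exact hSpsd.1
  have hdetSS : S.det * S.det = P.det := by rw [← Matrix.det_mul, hSS]
  have hSdet : IsUnit S.det := by
    refine isUnit_of_mul_isUnit_left (y := S.det) ?_
    rw [hdetSS]; exact hPdet
  set U := C * P⁻¹ with hUdef
  have hUP : U * P = C := by
    rw [hUdef, Matrix.mul_assoc, Matrix.nonsing_inv_mul P hPdet, Matrix.mul_one]
  have hUt : Uᵀ = P⁻¹ * Cᵀ := by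
    rw [hUdef, Matrix.transpose_mul, Matrix.transpose_nonsing_inv, hPt]
  have hUo : Uᵀ * U = 1 := by
    rw [hUt, hUdef]
    calc P⁻¹ * Cᵀ * (C * P⁻¹) = P⁻¹ * (Cᵀ * C) * P⁻¹ := by noncomm_ring
      _ = P⁻¹ * (P * P) * P⁻¹ := by rw [hPP]
      _ = (P⁻¹ * P) * (P * P⁻¹) := by noncomm_ring
      _ = 1 := by
          rw [Matrix.nonsing_inv_mul P hPdet, Matrix.mul_nonsing_inv P hPdet,
            Matrix.one_mul]
  have hUtrace : trace (Uᵀ * C) = trace P := by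
    rw [← hUP, ← Matrix.mul_assoc, hUo, Matrix.one_mul]
  have key : ∀ Q' : Matrix (Fin k) (Fin k) ℝ, Q'ᵀ * Q' = 1 →
      trace (Q'ᵀ * C) ≤ trace P ∧ (trace (Q'ᵀ * C) = trace P → Q' = U) := by
    intro Q' hQ'
    have hQQ : Q' * Q'ᵀ = 1 := mul_eq_one_comm.mp hQ'
    have hRo : (Q'ᵀ * U)ᵀ * (Q'ᵀ * U) = 1 := by
      rw [Matrix.transpose_mul, Matrix.transpose_transpose]
      calc Uᵀ * Q' * (Q'ᵀ * U) = Uᵀ * (Q' * Q'ᵀ) * U := by noncomm_ring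
        _ = 1 := by rw [hQQ, Matrix.mul_one, hUo]
    have htrc : trace (Q'ᵀ * C) = trace ((Q'ᵀ * U) * P) := by
      rw [← hUP, ← Matrix.mul_assoc]
    obtain ⟨hle, heq⟩ := trace_mul_le_of_orth P S (Q'ᵀ * U) hSt hSS hSdet hRo
    refine ⟨htrc ▸ hle, fun h => ?_⟩
    have hR1 : Q'ᵀ * U = 1 := heq (by rw [← htrc, h])
    calc Q' = Q' * (Q'ᵀ * U) := by rw [hR1, Matrix.mul_one]
      _ = (Q' * Q'ᵀ) * U := by rw [Matrix.mul_assoc]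
      _ = U := by rw [hQQ, Matrix.one_mul]
  refine ⟨U, ⟨hUo, fun Q' hQ' => ?_⟩, fun Q hQ => ?_⟩
  · rw [hUtrace]; exact (key Q' hQ').1
  · obtain ⟨hQo, hQmax⟩ := hQ
    refine (key Q hQo).2 (le_antisymm ((key Q hQo).1) ?_)
    rw [← hUtrace]; exact hQmax U hUo

end aux

/-- Corollary 3.6: if `rank(X_*ᵀD) = k`, then `max_{Q ∈ 𝕆^{k×k}} f_θ(X_*Q)` has a unique
maximizer; equivalently, among all `X ∈ 𝕆^{n×k}` with the same column space as `X_*`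
there is exactly one maximizer of `f_θ`. -/
theorem stmt12 {n k : ℕ} (hk : 1 ≤ k) (hkn : k < n)
    (A B : Matrix (Fin n) (Fin n) ℝ) (hA : A.IsSymm) (hB : B.PosSemidef)
    (hrank : n - k < B.rank)
    (D : Matrix (Fin n) (Fin k) ℝ) (θ : ℝ) (hθ0 : 0 ≤ θ) (hθ1 : θ ≤ 1)
    (Xs : Matrix (Fin n) (Fin k) ℝ) (hXs : Xsᵀ * Xs = 1)
    (hfull : (Xsᵀ * D).rank = k) :
    (∃! Q : Matrix (Fin k) (Fin k) ℝ, Qᵀ * Q = 1 ∧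
        ∀ Q' : Matrix (Fin k) (Fin k) ℝ, Q'ᵀ * Q' = 1 →
          fTheta A B D θ (Xs * Q') ≤ fTheta A B D θ (Xs * Q))
      ∧ (∃! X : Matrix (Fin n) (Fin k) ℝ, (Xᵀ * X = 1
            ∧ LinearMap.range X.mulVecLin = LinearMap.range Xs.mulVecLin)
          ∧ ∀ Y : Matrix (Fin n) (Fin k) ℝ, Yᵀ * Y = 1 →
              LinearMap.range Y.mulVecLin = LinearMap.range Xs.mulVecLin →
              fTheta A B D θ Y ≤ fTheta A B D θ X) := by
  -- positivity of the denominator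
  have hb0 : 0 < trace (Xsᵀ * B * Xs) := by
    obtain ⟨SB, hSBpsd, hSBS⟩ := psd_sqrt_exists B hB
    have hSBt : SBᵀ = SB := by
      rw [← Matrix.conjTranspose_eq_transpose_of_trivial]
      exact hSBpsd.1
    have hN : (SB * Xs)ᵀ * (SB * Xs) = Xsᵀ * B * Xs := by
      rw [Matrix.transpose_mul, hSBt]
      calc Xsᵀ * SB * (SB * Xs) = Xsᵀ * (SB * SB) * Xs := by
              simp only [Matrix.mul_assoc]
        _ = Xsᵀ * B * Xs := by rw [hSBS]
    have hnn : 0 ≤ trace (Xsᵀ * B * Xs) := by rw [← hN]; exact frob_nonneg _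
    rcases hnn.lt_or_eq with h | h
    · exact h
    · exfalso
      have hN0 : SB * Xs = 0 := frob_eq_zero _ (by rw [hN, ← h])
      have hBXs0 : B * Xs = 0 := by
        rw [← hSBS, Matrix.mul_assoc, hN0, Matrix.mul_zero]
      -- columns of Xs give a k-dimensional subspace of ker B
      have hsub : LinearMap.range Xs.mulVecLin ≤ LinearMap.ker B.mulVecLin := by
        rintro x ⟨v, rfl⟩
        simp only [LinearMap.mem_ker, Matrix.mulVecLin_apply, Matrix.mulVec_mulVec,
          hBXs0, Matrix.zero_mulVec]
      have hXsrank : Xs.rank = k := by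
        have h1 := Matrix.rank_transpose_mul_self Xs
        rw [hXs] at h1
        simpa using h1.symm
      have hkle : k ≤ Module.finrank ℝ (LinearMap.ker B.mulVecLin) := by
        have := Submodule.finrank_mono hsub
        have h2 : Module.finrank ℝ (LinearMap.range Xs.mulVecLin) = k := hXsrank
        omega
      have hrn := LinearMap.finrank_range_add_finrank_ker B.mulVecLin
      have hfr : Module.finrank ℝ (Fin n → ℝ) = n := by
        simp [Module.finrank_pi]
      have hBr : Module.finrank ℝ (LinearMap.range B.mulVecLin) = B.rank := rfl
      omega
  -- invertibility of C = Xsᵀ D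
  have hCunit : IsUnit (Xsᵀ * D).det := by
    have h1 : Module.finrank ℝ (LinearMap.range (Xsᵀ * D).mulVecLin) = k := hfull
    have htop : LinearMap.range (Xsᵀ * D).mulVecLin = ⊤ := by
      apply Submodule.eq_top_of_finrank_eq
      rw [h1]
      simp [Module.finrank_pi]
    have hsurj : Function.Surjective (Xsᵀ * D).mulVec := by
      intro v
      obtain ⟨w, hw⟩ := LinearMap.range_eq_top.mp htop v
      exact ⟨w, hw⟩
    exact (Matrix.isUnit_iff_isUnit_det _).mp (Matrix.mulVec_surjective_iff_isUnit.mp hsurj)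
  -- value of fTheta on Xs * Q
  have hval : ∀ Q : Matrix (Fin k) (Fin k) ℝ, Qᵀ * Q = 1 →
      fTheta A B D θ (Xs * Q) =
        (trace (Xsᵀ * A * Xs) + trace (Qᵀ * (Xsᵀ * D))) / trace (Xsᵀ * B * Xs) ^ θ := by
    intro Q hQ
    have hQQ : Q * Qᵀ = 1 := mul_eq_one_comm.mp hQ
    have htr : ∀ E : Matrix (Fin n) (Fin n) ℝ,
        trace ((Xs * Q)ᵀ * E * (Xs * Q)) = trace (Xsᵀ * E * Xs) := by
      intro E
      have h1 : (Xs * Q)ᵀ * E * (Xs * Q) = Qᵀ * ((Xsᵀ * E * Xs) * Q) := by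
        simp only [Matrix.transpose_mul, Matrix.mul_assoc]
      rw [h1, Matrix.trace_mul_comm, Matrix.mul_assoc, hQQ, Matrix.mul_one]
    have hD : trace ((Xs * Q)ᵀ * D) = trace (Qᵀ * (Xsᵀ * D)) := by
      have h1 : (Xs * Q)ᵀ * D = Qᵀ * (Xsᵀ * D) := by
        simp only [Matrix.transpose_mul, Matrix.mul_assoc]
      rw [h1]
    rw [fTheta, htr A, htr B, hD]
  have hd : (0:ℝ) < trace (Xsᵀ * B * Xs) ^ θ := Real.rpow_pos_of_pos hb0 θ
  have hmono : ∀ Q Q' : Matrix (Fin k) (Fin k) ℝ, Qᵀ * Q = 1 → Q'ᵀ * Q' = 1 →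
      (fTheta A B D θ (Xs * Q') ≤ fTheta A B D θ (Xs * Q) ↔
        trace (Q'ᵀ * (Xsᵀ * D)) ≤ trace (Qᵀ * (Xsᵀ * D))) := by
    intro Q Q' hQ hQ'
    rw [hval Q hQ, hval Q' hQ', div_le_div_iff_of_pos_right hd, add_le_add_iff_left]
  -- Part 1
  obtain ⟨U, ⟨hUo, hUmax⟩, hUuniq⟩ := procrustes (Xsᵀ * D) hCunit
  have part1 : ∃! Q : Matrix (Fin k) (Fin k) ℝ, Qᵀ * Q = 1 ∧
      ∀ Q' : Matrix (Fin k) (Fin k) ℝ, Q'ᵀ * Q' = 1 →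
        fTheta A B D θ (Xs * Q') ≤ fTheta A B D θ (Xs * Q) := by
    refine ⟨U, ⟨hUo, fun Q' hQ' => (hmono U Q' hUo hQ').mpr (hUmax Q' hQ')⟩, ?_⟩
    rintro Q ⟨hQo, hQmax⟩
    exact hUuniq Q ⟨hQo, fun Q' hQ' => (hmono Q Q' hQo hQ').mp (hQmax Q' hQ')⟩
  -- bridging lemmas for part 2
  have hXXs : ∀ Q : Matrix (Fin k) (Fin k) ℝ, Qᵀ * Q = 1 →
      (Xs * Q)ᵀ * (Xs * Q) = 1 ∧
        LinearMap.range (Xs * Q).mulVecLin = LinearMap.range Xs.mulVecLin := by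
    intro Q hQ
    have hQdet : IsUnit Q.det := by
      have h1 : Q.det * Q.det = 1 := by
        have := congrArg Matrix.det hQ
        rwa [Matrix.det_mul, Matrix.det_transpose, Matrix.det_one] at this
      exact IsUnit.of_mul_eq_one _ h1
    constructor
    · have h1 : (Xs * Q)ᵀ * (Xs * Q) = Qᵀ * ((Xsᵀ * Xs) * Q) := by
        simp only [Matrix.transpose_mul, Matrix.mul_assoc]
      rw [h1, hXs, Matrix.one_mul, hQ]
    · have hQtop : LinearMap.range Q.mulVecLin = ⊤ := by
        rw [LinearMap.range_eq_top]
        intro v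
        refine ⟨Q⁻¹ *ᵥ v, ?_⟩
        simp [Matrix.mulVecLin_apply, Matrix.mulVec_mulVec,
          Matrix.mul_nonsing_inv Q hQdet]
      rw [Matrix.mulVecLin_mul, LinearMap.range_comp, hQtop, Submodule.map_top]
  have hrev : ∀ X : Matrix (Fin n) (Fin k) ℝ, Xᵀ * X = 1 →
      LinearMap.range X.mulVecLin = LinearMap.range Xs.mulVecLin →
      (Xsᵀ * X)ᵀ * (Xsᵀ * X) = 1 ∧ Xs * (Xsᵀ * X) = X := by
    intro X hX hrg
    have hproj : Xs * (Xsᵀ * X) = X := by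
      have hcol : ∀ v, (Xs * (Xsᵀ * X)) *ᵥ v = X *ᵥ v := by
        intro v
        have hmem : X *ᵥ v ∈ LinearMap.range Xs.mulVecLin := by
          rw [← hrg]; exact ⟨v, rfl⟩
        obtain ⟨w, hw⟩ := hmem
        have hw' : Xs *ᵥ w = X *ᵥ v := hw
        calc (Xs * (Xsᵀ * X)) *ᵥ v = Xs *ᵥ (Xsᵀ *ᵥ (X *ᵥ v)) := by
              simp [Matrix.mulVec_mulVec, Matrix.mul_assoc]
          _ = Xs *ᵥ (Xsᵀ *ᵥ (Xs *ᵥ w)) := by rw [hw']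
          _ = Xs *ᵥ w := by
              simp only [Matrix.mulVec_mulVec, Matrix.mul_assoc, hXs, Matrix.mul_one]
          _ = X *ᵥ v := hw'
      ext i j
      have := congrFun (hcol (Pi.single j 1)) i
      simpa [Matrix.mulVec_single_one] using this
    refine ⟨?_, hproj⟩
    have h1 : (Xsᵀ * X)ᵀ * (Xsᵀ * X) = Xᵀ * (Xs * (Xsᵀ * X)) := by
      simp only [Matrix.transpose_mul, Matrix.transpose_transpose, Matrix.mul_assoc]
    rw [h1, hproj, hX]
  refine ⟨part1, ?_⟩
  obtain ⟨Q₀, ⟨hQ₀o, hQ₀max⟩, hQ₀uniq⟩ := part1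
  refine ⟨Xs * Q₀, ⟨⟨(hXXs Q₀ hQ₀o).1, (hXXs Q₀ hQ₀o).2⟩, fun Y hYo hYrg => ?_⟩, ?_⟩
  · obtain ⟨hQYo, hQYproj⟩ := hrev Y hYo hYrg
    have := hQ₀max (Xsᵀ * Y) hQYo
    rwa [hQYproj] at this
  · rintro X ⟨⟨hXo, hXrg⟩, hXmax⟩
    obtain ⟨hQXo, hQXproj⟩ := hrev X hXo hXrg
    have hQXmax : ∀ Q' : Matrix (Fin k) (Fin k) ℝ, Q'ᵀ * Q' = 1 →
        fTheta A B D θ (Xs * Q') ≤ fTheta A B D θ (Xs * (Xsᵀ * X)) := by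
      intro Q' hQ'
      rw [hQXproj]
      exact hXmax (Xs * Q') (hXXs Q' hQ').1 (hXXs Q' hQ').2
    have hQeq : Xsᵀ * X = Q₀ := hQ₀uniq (Xsᵀ * X) ⟨hQXo, hQXmax⟩
    rw [← hQXproj, hQeq]

end
end

section
/- Let E ∈ ℝ^{n×n} be symmetric with eigenvalues λ₁ ≥ ⋯ ≥ λ_n and suppose the eigenvalue gap λ_k − λ_{k+1} > 0. Then: (i) any two matrices X̂, Ŷ ∈ 𝕆^{n×k} that are orthonormal basis matrices of the invariant subspace of E associated with the k largest eigenvalues (i.e. E·X̂ = X̂·(X̂ᵀEX̂) with tr(X̂ᵀEX̂) = λ₁ + ⋯ + λ_k, and likewise for Ŷ) satisfy Ŷ = X̂Q for some Q ∈ 𝕆^{k×k}; (ii) if additionally rank(DᵀX̂) = k for D ∈ ℝ^{n×k}, then the post-processed matrix X̂UVᵀ, where X̂ᵀD = UΣVᵀ is a singular value decomposition, is uniquely determined: for any such X̂, Ŷ and any SVDs X̂ᵀD = UΣVᵀ and ŶᵀD = U'Σ'V'ᵀ, one has X̂UVᵀ = ŶU'V'ᵀ. -/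
open Matrix

lemma stmt14_sum_ite_lt {n k : ℕ} (h : k ≤ n) (f : Fin n → ℝ) :
    ∑ i : Fin n, (if (i : ℕ) < k then f i else 0) = ∑ i : Fin k, f (Fin.castLE h i) := by
  classical
  rw [Finset.sum_ite, Finset.sum_const_zero, add_zero]
  have hfil : (Finset.univ.filter (fun i : Fin n => (i : ℕ) < k))
      = Finset.univ.map (Fin.castLEEmb h) := by
    ext i
    simp only [Finset.mem_filter, Finset.mem_univ, true_and, Finset.mem_map]
    constructor
    · intro hi; exact ⟨⟨(i : ℕ), hi⟩, by simp [Fin.ext_iff]⟩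
    · rintro ⟨j, rfl⟩; simp
  rw [hfil, Finset.sum_map]
  rfl

lemma stmt14_rows_zero {n k : ℕ} (hk : 1 ≤ k) (hkn : k < n) (μ : Fin n → ℝ) (hμ : Antitone μ)
    (hgap : μ ⟨k, hkn⟩ < μ ⟨k - 1, lt_of_le_of_lt (Nat.sub_le k 1) hkn⟩)
    (M : Matrix (Fin n) (Fin k) ℝ) (hM : Mᵀ * M = 1)
    (htr : ∑ i : Fin n, μ i * (∑ j : Fin k, M i j ^ 2) = ∑ i : Fin k, μ (Fin.castLE hkn.le i)) :
    ∀ i : Fin n, k ≤ (i : ℕ) → ∀ j, M i j = 0 := by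
  classical
  set d : Fin n → ℝ := fun i => ∑ j, M i j ^ 2 with hd
  have hd0 : ∀ i, 0 ≤ d i := fun i => Finset.sum_nonneg fun j _ => sq_nonneg _
  have hG : (M * Mᵀ) * (M * Mᵀ) = M * Mᵀ := by
    rw [Matrix.mul_assoc, ← Matrix.mul_assoc Mᵀ, hM, Matrix.one_mul]
  have hdG : ∀ i, d i = (M * Mᵀ) i i := by
    intro i
    simp [hd, Matrix.mul_apply, sq]
  have hd1 : ∀ i, d i ≤ 1 := by
    intro i
    have h1 : d i = ∑ l, ((M * Mᵀ) i l) ^ 2 := by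
      have hGii := congrFun (congrFun hG i) i
      rw [hdG i, ← hGii, Matrix.mul_apply]
      refine Finset.sum_congr rfl fun l _ => ?_
      rw [sq]
      congr 1
      simp [Matrix.mul_apply, mul_comm]
    have h2 : d i ^ 2 ≤ d i := by
      calc d i ^ 2 = ((M * Mᵀ) i i) ^ 2 := by rw [hdG]
        _ ≤ ∑ l, ((M * Mᵀ) i l) ^ 2 :=
            Finset.single_le_sum (f := fun l => ((M * Mᵀ) i l) ^ 2)
              (fun l _ => sq_nonneg _) (Finset.mem_univ i)
        _ = d i := h1.symm
    nlinarith [hd0 i]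
  have hsumd : ∑ i, d i = (k : ℝ) := by
    have h1 : ∑ i, d i = Matrix.trace (Mᵀ * M) := by
      simp only [Matrix.trace, Matrix.diag, Matrix.mul_apply, Matrix.transpose_apply]
      rw [Finset.sum_comm]
      refine Finset.sum_congr rfl fun i _ => ?_
      simp [hd, sq]
    rw [h1, hM, Matrix.trace_one]
    simp
  set t : ℝ := (μ ⟨k, hkn⟩ + μ ⟨k - 1, by omega⟩) / 2 with ht
  have htlt : ∀ i : Fin n, (i : ℕ) < k → t < μ i := by
    intro i hi
    have h1 : μ ⟨k - 1, by omega⟩ ≤ μ i := hμ (by simp [Fin.le_def]; omega)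
    rw [ht]; linarith
  have hgt : ∀ i : Fin n, k ≤ (i : ℕ) → μ i < t := by
    intro i hi
    have h1 : μ i ≤ μ ⟨k, hkn⟩ := hμ (by simp [Fin.le_def]; omega)
    rw [ht]; linarith
  set g : Fin n → ℝ := fun i => (if (i : ℕ) < k then μ i - t else 0) - (μ i - t) * d i with hgdef
  have hg0 : ∀ i ∈ Finset.univ, 0 ≤ g i := by
    intro i _
    by_cases hi : (i : ℕ) < k
    · simp only [hgdef, if_pos hi]
      have h1 := htlt i hi
      nlinarith [hd1 i]
    · simp only [hgdef, if_neg hi]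
      have h2 := hgt i (le_of_not_gt hi)
      nlinarith [hd0 i]
  have hsumg : ∑ i, g i = 0 := by
    simp only [hgdef]
    rw [Finset.sum_sub_distrib, stmt14_sum_ite_lt hkn.le]
    have e1 : ∑ i : Fin n, (μ i - t) * d i = (∑ i, μ i * d i) - t * ∑ i, d i := by
      rw [Finset.mul_sum, ← Finset.sum_sub_distrib]
      refine Finset.sum_congr rfl fun i _ => by ring
    rw [e1, htr, hsumd, Finset.sum_sub_distrib]
    simp [Finset.sum_const, Finset.card_univ]
    ring
  have hgz := (Finset.sum_eq_zero_iff_of_nonneg hg0).mp hsumg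
  intro i hi j
  have hgi := hgz i (Finset.mem_univ i)
  have hdi : d i = 0 := by
    have hne : ¬ (i : ℕ) < k := not_lt.mpr hi
    simp only [hgdef, if_neg hne, zero_sub, neg_eq_zero] at hgi
    have h2 := hgt i hi
    rcases mul_eq_zero.mp hgi with h | h
    · exfalso; have := sub_eq_zero.mp h; linarith
    · exact h
  have hz := (Finset.sum_eq_zero_iff_of_nonneg (fun j _ => sq_nonneg (M i j))).mp hdi j
    (Finset.mem_univ j)
  exact pow_eq_zero_iff (two_ne_zero) |>.mp hz

lemma stmt14_proj_id {n k : ℕ} (hkn : k < n) (M N : Matrix (Fin n) (Fin k) ℝ)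
    (hM : Mᵀ * M = 1)
    (hM0 : ∀ i : Fin n, k ≤ (i : ℕ) → ∀ j, M i j = 0)
    (hN0 : ∀ i : Fin n, k ≤ (i : ℕ) → ∀ j, N i j = 0) :
    M * Mᵀ * N = N := by
  classical
  set M₁ : Matrix (Fin k) (Fin k) ℝ := M.submatrix (Fin.castLE hkn.le) id with hM₁def
  have hM₁ : M₁ᵀ * M₁ = 1 := by
    rw [← hM]
    ext a b
    simp only [Matrix.mul_apply, Matrix.transpose_apply, hM₁def, Matrix.submatrix_apply, id]
    rw [← stmt14_sum_ite_lt hkn.le (fun i => M i a * M i b)]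
    refine Finset.sum_congr rfl fun i _ => ?_
    by_cases hi : (i : ℕ) < k
    · rw [if_pos hi]
    · rw [if_neg hi, hM0 i (le_of_not_gt hi) a, zero_mul]
  have hMM₁ : M₁ * M₁ᵀ = 1 := mul_eq_one_comm.mp hM₁
  ext i j
  rw [Matrix.mul_apply]
  by_cases hi : (i : ℕ) < k
  · have hterm : ∀ l : Fin n, (M * Mᵀ) i l * N l j
        = if (l : ℕ) < k then (M * Mᵀ) i l * N l j else 0 := by
      intro l
      by_cases hl : (l : ℕ) < k
      · rw [if_pos hl]
      · rw [if_neg hl, hN0 l (le_of_not_gt hl) j, mul_zero]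
    rw [Finset.sum_congr rfl (fun l _ => hterm l), stmt14_sum_ite_lt hkn.le]
    have hent : ∀ l : Fin k, (M * Mᵀ) i (Fin.castLE hkn.le l) = (M₁ * M₁ᵀ) ⟨(i : ℕ), hi⟩ l := by
      intro l
      simp only [Matrix.mul_apply, Matrix.transpose_apply, hM₁def, Matrix.submatrix_apply, id]
      refine Finset.sum_congr rfl fun s _ => ?_
      congr 1
    simp_rw [hent, hMM₁]
    simp only [Matrix.one_apply, ite_mul, one_mul, zero_mul]
    rw [Finset.sum_ite_eq Finset.univ (⟨(i : ℕ), hi⟩ : Fin k)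
      (fun l => N (Fin.castLE hkn.le l) j)]
    simp
  · rw [hN0 i (le_of_not_gt hi) j]
    refine Finset.sum_eq_zero fun l _ => ?_
    have hz : (M * Mᵀ) i l = 0 := by
      rw [Matrix.mul_apply]
      exact Finset.sum_eq_zero fun s _ => by rw [hM0 i (le_of_not_gt hi) s, zero_mul]
    rw [hz, zero_mul]

lemma stmt14_isUnit_of_rank_eq {k : ℕ} (A : Matrix (Fin k) (Fin k) ℝ) (h : A.rank = k) : IsUnit A := by
  rw [← Matrix.mulVec_surjective_iff_isUnit]
  have htop : LinearMap.range A.mulVecLin = ⊤ := by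
    apply Submodule.eq_top_of_finrank_eq
    have : Module.finrank ℝ (Fin k → ℝ) = k := by simp
    rw [this]
    exact h
  intro y
  obtain ⟨x, hx⟩ := (LinearMap.range_eq_top.mp htop) y
  exact ⟨x, hx⟩

/-- Theorem 4.2: under the eigenvalue gap `λ_k(E) > λ_{k+1}(E)`, (i) any two orthonormal
basis matrices of the invariant subspace of `E` associated with its `k` largest eigenvalues
differ by a `k×k` orthogonal factor, and (ii) if moreover `rank(DᵀX̂) = k`, the post-processed
matrix `X̂UVᵀ` is uniquely determined. -/
theorem stmt14 {n k : ℕ} (hk : 1 ≤ k) (hkn : k < n)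
    (E : Matrix (Fin n) (Fin n) ℝ) (hE : E.IsSymm)
    -- `μ 0 ≥ μ 1 ≥ ⋯ ≥ μ (n-1)` are the eigenvalues of `E`
    (μ : Fin n → ℝ) (hμ : Antitone μ)
    (P : Matrix (Fin n) (Fin n) ℝ) (hP : Pᵀ * P = 1)
    (hEig : E = P * Matrix.diagonal μ * Pᵀ)
    -- the eigenvalue gap `λ_k − λ_{k+1} > 0`
    (hgap : μ ⟨k, hkn⟩ < μ ⟨k - 1, by omega⟩)
    (D : Matrix (Fin n) (Fin k) ℝ)
    (Xh Yh : Matrix (Fin n) (Fin k) ℝ) (hXh : Xhᵀ * Xh = 1) (hYh : Yhᵀ * Yh = 1)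
    -- `X̂` and `Ŷ` are orthonormal basis matrices of the invariant subspace of `E`
    -- associated with the `k` largest eigenvalues
    (hXinv : E * Xh = Xh * (Xhᵀ * E * Xh))
    (hXtop : trace (Xhᵀ * E * Xh) = ∑ i : Fin k, μ (Fin.castLE hkn.le i))
    (hYinv : E * Yh = Yh * (Yhᵀ * E * Yh))
    (hYtop : trace (Yhᵀ * E * Yh) = ∑ i : Fin k, μ (Fin.castLE hkn.le i)) :
    (∃ Q : Matrix (Fin k) (Fin k) ℝ, Qᵀ * Q = 1 ∧ Yh = Xh * Q)
      ∧ ((Dᵀ * Xh).rank = k →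
          ∀ (U V U' V' : Matrix (Fin k) (Fin k) ℝ) (σ σ' : Fin k → ℝ),
            Uᵀ * U = 1 → Vᵀ * V = 1 → U'ᵀ * U' = 1 → V'ᵀ * V' = 1 →
            Antitone σ → (∀ i, 0 ≤ σ i) → Antitone σ' → (∀ i, 0 ≤ σ' i) →
            Xhᵀ * D = U * Matrix.diagonal σ * Vᵀ →
            Yhᵀ * D = U' * Matrix.diagonal σ' * V'ᵀ →
            Xh * (U * Vᵀ) = Yh * (U' * V'ᵀ)) := by
  classical
  have hPPt : P * Pᵀ = 1 := mul_eq_one_comm.mp hP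
  set Mx : Matrix (Fin n) (Fin k) ℝ := Pᵀ * Xh with hMxdef
  set My : Matrix (Fin n) (Fin k) ℝ := Pᵀ * Yh with hMydef
  have hMxT : Mxᵀ = Xhᵀ * P := by
    rw [hMxdef, Matrix.transpose_mul, Matrix.transpose_transpose]
  have hMyT : Myᵀ = Yhᵀ * P := by
    rw [hMydef, Matrix.transpose_mul, Matrix.transpose_transpose]
  have hMxo : Mxᵀ * Mx = 1 := by
    rw [hMxT, hMxdef, Matrix.mul_assoc, ← Matrix.mul_assoc P Pᵀ, hPPt, Matrix.one_mul, hXh]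
  have hMyo : Myᵀ * My = 1 := by
    rw [hMyT, hMydef, Matrix.mul_assoc, ← Matrix.mul_assoc P Pᵀ, hPPt, Matrix.one_mul, hYh]
  -- trace formula
  have trace_eq : ∀ M : Matrix (Fin n) (Fin k) ℝ,
      trace (Mᵀ * Matrix.diagonal μ * M) = ∑ i : Fin n, μ i * ∑ j : Fin k, M i j ^ 2 := by
    intro M
    simp only [Matrix.trace, Matrix.diag, Matrix.mul_apply, Matrix.mul_diagonal,
      Matrix.transpose_apply]
    rw [Finset.sum_comm]
    refine Finset.sum_congr rfl fun i _ => ?_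
    rw [Finset.mul_sum]
    refine Finset.sum_congr rfl fun j _ => ?_
    simp only [Matrix.diagonal_apply, mul_ite, ite_mul, mul_zero, zero_mul,
      Finset.sum_ite_eq', Finset.mem_univ, if_true]
    ring
  have hconj : ∀ Z : Matrix (Fin n) (Fin k) ℝ,
      Zᵀ * E * Z = (Pᵀ * Z)ᵀ * Matrix.diagonal μ * (Pᵀ * Z) := by
    intro Z
    rw [hEig, Matrix.transpose_mul, Matrix.transpose_transpose]
    simp only [Matrix.mul_assoc]
  have hX0 : ∀ i : Fin n, k ≤ (i : ℕ) → ∀ j, Mx i j = 0 := by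
    refine stmt14_rows_zero hk hkn μ hμ hgap Mx hMxo ?_
    rw [← trace_eq, hMxdef, ← hconj, hXtop]
  have hY0 : ∀ i : Fin n, k ≤ (i : ℕ) → ∀ j, My i j = 0 := by
    refine stmt14_rows_zero hk hkn μ hμ hgap My hMyo ?_
    rw [← trace_eq, hMydef, ← hconj, hYtop]
  have hXPM : P * Mx = Xh := by
    rw [hMxdef, ← Matrix.mul_assoc, hPPt, Matrix.one_mul]
  have hYPM : P * My = Yh := by
    rw [hMydef, ← Matrix.mul_assoc, hPPt, Matrix.one_mul]
  have hproj : Mx * Mxᵀ * My = My := stmt14_proj_id hkn Mx My hMxo hX0 hY0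
  have hXtY : Xhᵀ * Yh = Mxᵀ * My := by
    rw [hMxT, hMydef, Matrix.mul_assoc, ← Matrix.mul_assoc P Pᵀ, hPPt, Matrix.one_mul]
  have hXQ : Xh * (Xhᵀ * Yh) = Yh := by
    calc Xh * (Xhᵀ * Yh) = (P * Mx) * (Mxᵀ * My) := by rw [hXPM, hXtY]
      _ = P * (Mx * Mxᵀ * My) := by simp only [Matrix.mul_assoc]
      _ = P * My := by rw [hproj]
      _ = Yh := hYPM
  have hQorth : (Xhᵀ * Yh)ᵀ * (Xhᵀ * Yh) = 1 := by
    rw [Matrix.transpose_mul, Matrix.transpose_transpose, Matrix.mul_assoc, hXQ, hYh]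
  refine ⟨⟨Xhᵀ * Yh, hQorth, hXQ.symm⟩, ?_⟩
  intro hrank U V U' V' σ σ' hU hV hU' hV' _ hσ0 _ hσ'0 hXD hYD
  set Q : Matrix (Fin k) (Fin k) ℝ := Xhᵀ * Yh with hQdef
  have hQQt : Q * Qᵀ = 1 := mul_eq_one_comm.mp hQorth
  have hYhT : Yhᵀ = Qᵀ * Xhᵀ := by
    conv_lhs => rw [← hXQ]
    rw [Matrix.transpose_mul]
  set M : Matrix (Fin k) (Fin k) ℝ := Xhᵀ * D with hMdef
  have hM2 : M = Q * (U' * Matrix.diagonal σ' * V'ᵀ) := by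
    rw [← hYD, hYhT]
    simp only [← Matrix.mul_assoc]
    rw [hQQt, Matrix.one_mul]
  have hMunit : IsUnit M := by
    apply stmt14_isUnit_of_rank_eq
    have hMT : Mᵀ = Dᵀ * Xh := by
      rw [hMdef, Matrix.transpose_mul, Matrix.transpose_transpose]
    rw [← Matrix.rank_transpose, hMT]
    exact hrank
  set P₁ : Matrix (Fin k) (Fin k) ℝ := V * Matrix.diagonal σ * Vᵀ with hP₁def
  set P₂ : Matrix (Fin k) (Fin k) ℝ := V' * Matrix.diagonal σ' * V'ᵀ with hP₂def
  have hCT : ∀ W : Matrix (Fin k) (Fin k) ℝ, Wᴴ = Wᵀ := fun W => by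
    ext a b; simp [Matrix.conjTranspose_apply]
  have hP₁psd : P₁.PosSemidef := by
    have := (Matrix.posSemidef_diagonal_iff.mpr hσ0).mul_mul_conjTranspose_same V
    rwa [hCT] at this
  have hP₂psd : P₂.PosSemidef := by
    have := (Matrix.posSemidef_diagonal_iff.mpr hσ'0).mul_mul_conjTranspose_same V'
    rwa [hCT] at this
  have e1 : P₁ * P₁ = Mᵀ * M := by
    rw [hXD, hP₁def]
    simp only [hP₁def, Matrix.transpose_mul, Matrix.transpose_transpose,
      Matrix.diagonal_transpose, Matrix.mul_assoc]
    rw [← Matrix.mul_assoc Vᵀ V, hV, Matrix.one_mul, ← Matrix.mul_assoc Uᵀ U, hU, Matrix.one_mul]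
  have e2 : P₂ * P₂ = Mᵀ * M := by
    rw [hM2]
    simp only [hP₂def, Matrix.transpose_mul, Matrix.transpose_transpose,
      Matrix.diagonal_transpose, Matrix.mul_assoc]
    rw [← Matrix.mul_assoc Qᵀ Q, hQorth, Matrix.one_mul, ← Matrix.mul_assoc V'ᵀ V', hV',
      Matrix.one_mul, ← Matrix.mul_assoc U'ᵀ U', hU', Matrix.one_mul]
  have hP12 : P₁ = P₂ := by
    open scoped MatrixOrder in
    exact (CFC.mul_self_eq_mul_self_iff P₁ P₂ hP₁psd.nonneg hP₂psd.nonneg).mp (by rw [e1, e2])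
  have hdM : M.det ≠ 0 := (Matrix.isUnit_iff_isUnit_det M).mp hMunit |>.ne_zero
  have hdP : IsUnit P₁.det := by
    have hsq : P₁.det * P₁.det = M.det * M.det := by
      rw [← Matrix.det_mul, e1, Matrix.det_mul, Matrix.det_transpose]
    rw [isUnit_iff_ne_zero]
    intro h
    rw [h, mul_zero] at hsq
    exact hdM (mul_self_eq_zero.mp hsq.symm)
  have f1 : (U * Vᵀ) * P₁ = M := by
    rw [hXD, hP₁def]
    simp only [Matrix.mul_assoc]
    rw [← Matrix.mul_assoc Vᵀ V, hV, Matrix.one_mul]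
  have f2 : (Q * (U' * V'ᵀ)) * P₂ = M := by
    rw [hM2, hP₂def]
    simp only [Matrix.mul_assoc]
    rw [← Matrix.mul_assoc V'ᵀ V', hV', Matrix.one_mul]
  have hW : U * Vᵀ = Q * (U' * V'ᵀ) := by
    have h12 : (U * Vᵀ) * P₁ = (Q * (U' * V'ᵀ)) * P₁ := by rw [f1, hP12, f2]
    calc U * Vᵀ = (U * Vᵀ) * P₁ * P₁⁻¹ := by
          rw [Matrix.mul_assoc, Matrix.mul_nonsing_inv _ hdP, Matrix.mul_one]
      _ = (Q * (U' * V'ᵀ)) * P₁ * P₁⁻¹ := by rw [h12]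
      _ = Q * (U' * V'ᵀ) := by
          rw [Matrix.mul_assoc, Matrix.mul_nonsing_inv _ hdP, Matrix.mul_one]
  rw [hW, ← Matrix.mul_assoc, hXQ]
end

section
/- (One step of the SCF iteration does not decrease the objective.) Let X ∈ 𝕆^{n×k} and suppose either θ ∈ {0,1} or tr(XᵀAX + XᵀD) ≥ 0. Let X̂ ∈ 𝕆^{n×k} satisfy tr(X̂ᵀ E(X) X̂) ≥ tr(Xᵀ E(X) X), let X̂ᵀD = UΣVᵀ be a singular value decomposition with U, V ∈ 𝕆^{k×k}, and set X' = X̂UVᵀ. Then f_θ(X') ≥ f_θ(X); and if tr(X̂ᵀ E(X) X̂) > tr(Xᵀ E(X) X), then f_θ(X') > f_θ(X). -/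
open Matrix

noncomputable section

/-- Positivity of `tr(XᵀBX)` under the rank condition. -/
private lemma trace_BX_pos {n k : ℕ} (hk : 1 ≤ k) {B : Matrix (Fin n) (Fin n) ℝ}
    (hB : B.PosSemidef) (hrank : n - k < B.rank)
    {X : Matrix (Fin n) (Fin k) ℝ} (hX : Xᵀ * X = 1) :
    0 < trace (Xᵀ * B * X) := by
  have hXrank : X.rank = k := by
    refine le_antisymm (X.rank_le_card_width.trans (Fintype.card_fin k).le) ?_
    calc k = (1 : Matrix (Fin k) (Fin k) ℝ).rank := by
            rw [Matrix.rank_one, Fintype.card_fin]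
      _ = (Xᵀ * X).rank := by rw [hX]
      _ ≤ X.rank := Matrix.rank_mul_le_right _ _
  open scoped MatrixOrder in set C := CFC.sqrt B with hCdef
  have hCC : C * C = B := by
    open scoped MatrixOrder in exact CFC.sqrt_mul_sqrt_self B hB.nonneg
  have hCt : Cᵀ = C := by
    rw [← Matrix.conjTranspose_eq_transpose_of_trivial]
    open scoped MatrixOrder in exact (CFC.sqrt_nonneg B).posSemidef.1
  have hfact : Xᵀ * B * X = (C * X)ᵀ * (C * X) := by
    rw [Matrix.transpose_mul, hCt, ← hCC]
    simp [Matrix.mul_assoc]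
  have htr : trace (Xᵀ * B * X) = ∑ j, ∑ i, ((C * X) i j) ^ 2 := by
    rw [hfact]
    simp [Matrix.trace, Matrix.diag, Matrix.mul_apply, sq, mul_comm]
  have hnn : 0 ≤ trace (Xᵀ * B * X) := by rw [htr]; positivity
  rcases hnn.lt_or_eq with h | h
  · exact h
  exfalso
  have hsum0 : ∑ j, ∑ i, ((C * X) i j) ^ 2 = 0 := by rw [← htr]; exact h.symm
  have hz1 := (Finset.sum_eq_zero_iff_of_nonneg
    (fun (j : Fin k) _ => Finset.sum_nonneg fun (i : Fin n) _ => sq_nonneg ((C * X) i j))).mp hsum0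
  have hCX : C * X = 0 := by
    ext i j
    have h2 := (Finset.sum_eq_zero_iff_of_nonneg
      (fun (i : Fin n) _ => sq_nonneg ((C * X) i j))).mp (hz1 j (Finset.mem_univ _)) i
      (Finset.mem_univ _)
    simpa using (pow_eq_zero_iff two_ne_zero).mp h2
  have hBX : B * X = 0 := by rw [← hCC, Matrix.mul_assoc, hCX, Matrix.mul_zero]
  have hle : LinearMap.range X.mulVecLin ≤ LinearMap.ker B.mulVecLin := by
    rintro _ ⟨v, rfl⟩
    show B.mulVecLin (X.mulVecLin v) = 0
    simp only [Matrix.mulVecLin_apply]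
    rw [Matrix.mulVec_mulVec, hBX, Matrix.zero_mulVec]
  have h1 : X.rank ≤ Module.finrank ℝ (LinearMap.ker B.mulVecLin) :=
    Submodule.finrank_mono hle
  have h2 := LinearMap.finrank_range_add_finrank_ker B.mulVecLin
  have h3 : Module.finrank ℝ (Fin n → ℝ) = n := by
    simp [Module.finrank_fintype_fun_eq_card]
  have hBrank : B.rank = Module.finrank ℝ (LinearMap.range B.mulVecLin) := rfl
  omega

private lemma trace_conj {k : ℕ} (P M : Matrix (Fin k) (Fin k) ℝ) (hP : P * Pᵀ = 1) :
    trace (Pᵀ * M * P) = trace M := by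
  rw [Matrix.trace_mul_comm, ← Matrix.mul_assoc, hP, Matrix.one_mul]

private lemma trace_conj' {k : ℕ} (P M : Matrix (Fin k) (Fin k) ℝ) (hP : Pᵀ * P = 1) :
    trace (P * M * Pᵀ) = trace M := by
  rw [Matrix.trace_mul_comm, ← Matrix.mul_assoc, hP, Matrix.one_mul]

private lemma rpow_le_lin {t θ : ℝ} (ht : 0 < t) (h0 : 0 ≤ θ) (h1 : θ ≤ 1) :
    t ^ θ ≤ (1 - θ) + θ * t := by
  have := Real.geom_mean_le_arith_mean2_weighted (sub_nonneg.2 h1) h0 zero_le_one ht.le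
    (by ring)
  simpa using this

private lemma key_le {p p' q q' θ : ℝ} (hq : 0 < q) (hq' : 0 < q')
    (h0 : 0 ≤ θ) (h1 : θ ≤ 1) (hcase : (θ = 0 ∨ θ = 1) ∨ 0 ≤ p)
    (h : (1 - θ) * p + θ * (p / q) * q' ≤ p') :
    p / q ^ θ ≤ p' / q' ^ θ := by
  have hqθ : (0:ℝ) < q ^ θ := Real.rpow_pos_of_pos hq θ
  have hq'θ : (0:ℝ) < q' ^ θ := Real.rpow_pos_of_pos hq' θ
  rw [div_le_div_iff₀ hqθ hq'θ]
  rcases hcase with (rfl | rfl) | hp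
  · simp only [Real.rpow_zero, mul_one]
    linarith
  · simp only [Real.rpow_one]
    have h' : p / q * q' ≤ p' := by linarith
    have := mul_le_mul_of_nonneg_right h' hq.le
    calc p * q' = p / q * q' * q := by field_simp
      _ ≤ p' * q := this
  · have hkey : p * ((q'/q) ^ (θ:ℝ)) ≤ p' := by
      have hb := rpow_le_lin (div_pos hq' hq) h0 h1
      have := mul_le_mul_of_nonneg_left hb hp
      calc p * ((q'/q) ^ (θ:ℝ)) ≤ p * ((1 - θ) + θ * (q'/q)) := this
        _ = (1 - θ) * p + θ * (p / q) * q' := by field_simp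
        _ ≤ p' := h
    have hdr : ((q'/q) ^ (θ:ℝ)) = q' ^ θ / q ^ θ := Real.div_rpow hq'.le hq.le θ
    rw [hdr] at hkey
    calc p * q' ^ θ = p * (q' ^ θ / q ^ θ) * q ^ θ := by field_simp
      _ ≤ p' * q ^ θ := mul_le_mul_of_nonneg_right hkey hqθ.le

private lemma key_lt {p p' q q' θ : ℝ} (hq : 0 < q) (hq' : 0 < q')
    (h0 : 0 ≤ θ) (h1 : θ ≤ 1) (hcase : (θ = 0 ∨ θ = 1) ∨ 0 ≤ p)
    (h : (1 - θ) * p + θ * (p / q) * q' < p') :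
    p / q ^ θ < p' / q' ^ θ := by
  have hqθ : (0:ℝ) < q ^ θ := Real.rpow_pos_of_pos hq θ
  have hq'θ : (0:ℝ) < q' ^ θ := Real.rpow_pos_of_pos hq' θ
  rw [div_lt_div_iff₀ hqθ hq'θ]
  rcases hcase with (rfl | rfl) | hp
  · simp only [Real.rpow_zero, mul_one]
    linarith
  · simp only [Real.rpow_one]
    have h' : p / q * q' < p' := by linarith
    have := mul_lt_mul_of_pos_right h' hq
    calc p * q' = p / q * q' * q := by field_simp
      _ < p' * q := this
  · have hkey : p * ((q'/q) ^ (θ:ℝ)) < p' := by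
      have hb := rpow_le_lin (div_pos hq' hq) h0 h1
      have := mul_le_mul_of_nonneg_left hb hp
      calc p * ((q'/q) ^ (θ:ℝ)) ≤ p * ((1 - θ) + θ * (q'/q)) := this
        _ = (1 - θ) * p + θ * (p / q) * q' := by field_simp
        _ < p' := h
    have hdr : ((q'/q) ^ (θ:ℝ)) = q' ^ θ / q ^ θ := Real.div_rpow hq'.le hq.le θ
    rw [hdr] at hkey
    calc p * q' ^ θ = p * (q' ^ θ / q ^ θ) * q ^ θ := by field_simp
      _ < p' * q ^ θ := mul_lt_mul_of_pos_right hkey hqθ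

/-- Expansion of `tr(Yᵀ E(X) Y)`. -/
private lemma traceE {n k : ℕ} (A B : Matrix (Fin n) (Fin n) ℝ) (D : Matrix (Fin n) (Fin k) ℝ)
    (θ : ℝ) (X Y : Matrix (Fin n) (Fin k) ℝ) :
    trace (Yᵀ * Emat A B D θ X * Y) =
      (2 / trace (Xᵀ * B * X) ^ θ) *
        (trace (Yᵀ * A * Y)
          + 2⁻¹ * (trace (Yᵀ * (D * Xᵀ) * Y) + trace (Yᵀ * (X * Dᵀ) * Y))
          - θ * f1 A B D X * trace (Yᵀ * B * Y)) := by
  simp only [Emat, Matrix.mul_smul, Matrix.smul_mul, Matrix.mul_add, Matrix.add_mul,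
    Matrix.mul_sub, Matrix.sub_mul, trace_smul, trace_add, trace_sub, smul_eq_mul]
  try ring

/-- One step of the SCF iteration does not decrease the objective. -/
theorem stmt15 {n k : ℕ} (hk : 1 ≤ k) (hkn : k < n)
    (A B : Matrix (Fin n) (Fin n) ℝ) (hA : A.IsSymm) (hB : B.PosSemidef)
    (hrank : n - k < B.rank)
    (D : Matrix (Fin n) (Fin k) ℝ) (θ : ℝ) (hθ0 : 0 ≤ θ) (hθ1 : θ ≤ 1)
    (X : Matrix (Fin n) (Fin k) ℝ) (hX : Xᵀ * X = 1)
    (hcase : (θ = 0 ∨ θ = 1) ∨ 0 ≤ trace (Xᵀ * A * X) + trace (Xᵀ * D))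
    (Xh : Matrix (Fin n) (Fin k) ℝ) (hXh : Xhᵀ * Xh = 1)
    (htr : trace (Xᵀ * Emat A B D θ X * X) ≤ trace (Xhᵀ * Emat A B D θ X * Xh))
    (U V : Matrix (Fin k) (Fin k) ℝ) (hU : Uᵀ * U = 1) (hV : Vᵀ * V = 1)
    (σ : Fin k → ℝ) (hσpos : ∀ i, 0 ≤ σ i)
    (hSVD : Xhᵀ * D = U * Matrix.diagonal σ * Vᵀ)
    (X' : Matrix (Fin n) (Fin k) ℝ) (hX' : X' = Xh * U * Vᵀ) :
    fTheta A B D θ X ≤ fTheta A B D θ X'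
      ∧ (trace (Xᵀ * Emat A B D θ X * X) < trace (Xhᵀ * Emat A B D θ X * Xh) →
          fTheta A B D θ X < fTheta A B D θ X') := by
  -- notation
  have hq : 0 < trace (Xᵀ * B * X) := trace_BX_pos hk hB hrank hX
  have hq' : 0 < trace (Xhᵀ * B * Xh) := trace_BX_pos hk hB hrank hXh
  set q : ℝ := trace (Xᵀ * B * X) with hq_def
  set q' : ℝ := trace (Xhᵀ * B * Xh) with hq'_def
  set pA : ℝ := trace (Xᵀ * A * X) with hpA_def
  set pD : ℝ := trace (Xᵀ * D) with hpD_def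
  set pAh : ℝ := trace (Xhᵀ * A * Xh) with hpAh_def
  set s : ℝ := trace (Xhᵀ * (D * Xᵀ) * Xh) with hs_def
  have hc : (0:ℝ) < 2 / q ^ θ := by positivity
  have hf1 : f1 A B D X = (pA + pD) / q := rfl
  -- trace of E at X
  have hEX : trace (Xᵀ * Emat A B D θ X * X) = (2 / q ^ θ) * ((1 - θ) * (pA + pD)) := by
    rw [traceE]
    have e1 : Xᵀ * (D * Xᵀ) * X = Xᵀ * D := by
      simp only [Matrix.mul_assoc, hX, Matrix.mul_one]
    have e2 : Xᵀ * (X * Dᵀ) * X = Dᵀ * X := by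
      simp only [← Matrix.mul_assoc]
      rw [hX, Matrix.one_mul]
    have e3 : trace (Dᵀ * X) = trace (Xᵀ * D) := by
      calc trace (Dᵀ * X) = trace ((Xᵀ * D)ᵀ) := by
            rw [Matrix.transpose_mul, Matrix.transpose_transpose]
        _ = trace (Xᵀ * D) := Matrix.trace_transpose _
    rw [e1, e2, e3, hf1]
    rw [← hq_def, ← hpA_def, ← hpD_def]
    have hqq : (pA + pD) / q * q = pA + pD := div_mul_cancel₀ _ hq.ne'
    rw [mul_assoc θ ((pA + pD) / q) q, hqq]
    ring
  -- trace of E at Xh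
  have hEXh : trace (Xhᵀ * Emat A B D θ X * Xh)
      = (2 / q ^ θ) * (pAh + s - θ * ((pA + pD) / q) * q') := by
    rw [traceE]
    have e4 : trace (Xhᵀ * (X * Dᵀ) * Xh) = s := by
      have et : (Xhᵀ * (D * Xᵀ) * Xh)ᵀ = Xhᵀ * (X * Dᵀ) * Xh := by
        simp [Matrix.transpose_mul, Matrix.transpose_transpose, Matrix.mul_assoc]
      rw [← et, Matrix.trace_transpose, hs_def]
    rw [e4, hf1, ← hq_def, ← hq'_def, ← hpAh_def, ← hs_def]
    ring
  -- orthogonality facts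
  have hUUt : U * Uᵀ = 1 := mul_eq_one_comm.mp hU
  have hVVt : V * Vᵀ = 1 := mul_eq_one_comm.mp hV
  have hPPt : (U * Vᵀ) * (U * Vᵀ)ᵀ = 1 := by
    rw [Matrix.transpose_mul, Matrix.transpose_transpose, Matrix.mul_assoc,
      ← Matrix.mul_assoc Vᵀ V Uᵀ, hV, Matrix.one_mul, hUUt]
  -- s ≤ ∑ σ
  have hsS : s ≤ ∑ i, σ i := by
    set Y := X * V with hY_def
    set Z := Xh * U with hZ_def
    have hYY : Yᵀ * Y = 1 := by
      rw [hY_def, Matrix.transpose_mul, Matrix.mul_assoc, ← Matrix.mul_assoc Xᵀ X V, hX,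
        Matrix.one_mul, hV]
    have hZZ : Zᵀ * Z = 1 := by
      rw [hZ_def, Matrix.transpose_mul, Matrix.mul_assoc, ← Matrix.mul_assoc Xhᵀ Xh U, hXh,
        Matrix.one_mul, hU]
    set G := Yᵀ * Z with hG_def
    have hsG : s = trace (G * Matrix.diagonal σ) := by
      have e5 : Xhᵀ * (D * Xᵀ) * Xh = (Xhᵀ * D) * (Xᵀ * Xh) := by
        simp [Matrix.mul_assoc]
      have e6 : trace ((Xhᵀ * D) * (Xᵀ * Xh)) = trace ((Xᵀ * Xh) * (Xhᵀ * D)) :=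
        Matrix.trace_mul_comm _ _
      have e7 : (Xᵀ * Xh) * (Xhᵀ * D) = ((Xᵀ * Xh) * (U * Matrix.diagonal σ)) * Vᵀ := by
        rw [hSVD]; simp [Matrix.mul_assoc]
      have e8 : trace (((Xᵀ * Xh) * (U * Matrix.diagonal σ)) * Vᵀ)
          = trace (Vᵀ * ((Xᵀ * Xh) * (U * Matrix.diagonal σ))) :=
        Matrix.trace_mul_comm _ _
      have e9 : Vᵀ * ((Xᵀ * Xh) * (U * Matrix.diagonal σ)) = G * Matrix.diagonal σ := by
        rw [hG_def, hY_def, hZ_def]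
        simp [Matrix.transpose_mul, Matrix.mul_assoc]
      rw [hs_def, e5, e6, e7, e8, e9]
    have hGdiag : ∀ i, G i i ≤ 1 := by
      intro i
      have hYi : ∑ j, (Y j i) ^ 2 = 1 := by
        have := congrFun (congrFun hYY i) i
        simpa [Matrix.mul_apply, Matrix.one_apply, sq] using this
      have hZi : ∑ j, (Z j i) ^ 2 = 1 := by
        have := congrFun (congrFun hZZ i) i
        simpa [Matrix.mul_apply, Matrix.one_apply, sq] using this
      have hGi : G i i = ∑ j, Y j i * Z j i := by
        simp [hG_def, Matrix.mul_apply, Matrix.transpose_apply]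
      have hcs := Finset.sum_mul_sq_le_sq_mul_sq Finset.univ (fun j => Y j i) (fun j => Z j i)
      rw [hYi, hZi, one_mul] at hcs
      rw [hGi]
      nlinarith [hcs, sq_nonneg ((∑ j, Y j i * Z j i) - 1)]
    have htrG : trace (G * Matrix.diagonal σ) = ∑ i, G i i * σ i := by
      simp [Matrix.trace, Matrix.diag, Matrix.mul_diagonal]
    rw [hsG, htrG]
    exact Finset.sum_le_sum fun i _ => mul_le_of_le_one_left (hσpos i) (hGdiag i)
  -- quantities at X'
  have hA' : trace (X'ᵀ * A * X') = pAh := by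
    have e10 : X'ᵀ * A * X' = (U * Vᵀ)ᵀ * (Xhᵀ * A * Xh) * (U * Vᵀ) := by
      rw [hX']
      simp [Matrix.transpose_mul, Matrix.mul_assoc]
    rw [e10, trace_conj _ _ hPPt, hpAh_def]
  have hB' : trace (X'ᵀ * B * X') = q' := by
    have e11 : X'ᵀ * B * X' = (U * Vᵀ)ᵀ * (Xhᵀ * B * Xh) * (U * Vᵀ) := by
      rw [hX']
      simp [Matrix.transpose_mul, Matrix.mul_assoc]
    rw [e11, trace_conj _ _ hPPt, hq'_def]
  have hD' : trace (X'ᵀ * D) = ∑ i, σ i := by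
    have e12 : X'ᵀ * D = V * Matrix.diagonal σ * Vᵀ := by
      rw [hX']
      calc (Xh * U * Vᵀ)ᵀ * D = V * (Uᵀ * (Xhᵀ * D)) := by
            simp [Matrix.transpose_mul, Matrix.mul_assoc]
        _ = V * (Uᵀ * (U * (Matrix.diagonal σ * Vᵀ))) := by rw [hSVD, Matrix.mul_assoc]
        _ = V * (Matrix.diagonal σ * Vᵀ) := by
            rw [← Matrix.mul_assoc Uᵀ U, hU, Matrix.one_mul]
        _ = V * Matrix.diagonal σ * Vᵀ := by rw [Matrix.mul_assoc]
    rw [e12, trace_conj' _ _ hV, Matrix.trace_diagonal]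
  -- the main inequality
  have hfX : fTheta A B D θ X = (pA + pD) / q ^ θ := rfl
  have hfX' : fTheta A B D θ X' = (pAh + ∑ i, σ i) / q' ^ θ := by
    simp only [fTheta, hA', hB', hD']
  constructor
  · rw [hfX, hfX']
    apply key_le hq hq' hθ0 hθ1 hcase
    have h1 : (1 - θ) * (pA + pD) ≤ pAh + s - θ * ((pA + pD) / q) * q' := by
      rw [hEX, hEXh] at htr
      exact le_of_mul_le_mul_left htr hc
    linarith
  · intro hlt
    rw [hfX, hfX']
    apply key_lt hq hq' hθ0 hθ1 hcase
    have h1 : (1 - θ) * (pA + pD) < pAh + s - θ * ((pA + pD) / q) * q' := by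
      rw [hEX, hEXh] at hlt
      exact lt_of_mul_lt_mul_left hlt hc.le
    linarith

end
end
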